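/- arXiv:2412.07118 — 3 statements merged into one kernel-verified Lean document; each statement's English description precedes it below -/
import Mathlib

section
/- The adjoint projection I_K^{d^k} is quasi-optimal in the broken HΛ^k norm: there is a constant C depending only on k, n and the shape regularity of the cube K such that ‖ω − I_K^{d^k} ω‖_{HΛ^k(K)} ≤ C inf_{η ∈ P_1^-Λ^k(K)} ‖ω − η‖_{HΛ^k(K)} for all ω ∈ HΛ^k(K). -/
open MvPolynomial Finset MeasureTheory

/-- Strictly increasing `k`-indices in `{1,…,n}`, modelled as `k`-element subsets of `Fin n`. -/
abbrev Idx (n k : ℕ) := {s : Finset (Fin n) // s.card = k}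

/-- A differential `k`-form with polynomial coefficients on `ℝⁿ`:
one polynomial coefficient for each increasing `k`-index. -/
abbrev Form (n k : ℕ) := Idx n k → MvPolynomial (Fin n) ℝ

/-- The sign `(-1)^{#\{j ∈ s : j < i\}}`. -/
noncomputable def sgn {n : ℕ} (s : Finset (Fin n)) (i : Fin n) : ℝ :=
  (-1) ^ (s.filter (· < i)).card

def eraseIdx {n k : ℕ} (s : Idx n (k+1)) {i : Fin n} (hi : i ∈ s.1) : Idx n k :=
  ⟨s.1.erase i, by simp [Finset.card_erase_of_mem hi, s.2]⟩

def insertIdx {n k : ℕ} (s : Idx n k) {i : Fin n} (hi : i ∉ s.1) : Idx n (k+1) :=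
  ⟨insert i s.1, by simp [Finset.card_insert_of_notMem hi, s.2]⟩

/-- The exterior derivative `d^k`. -/
noncomputable def extd (n k : ℕ) : Form n k →ₗ[ℝ] Form n (k+1) where
  toFun ω := fun s => ∑ i ∈ s.1.attach, sgn s.1 i.1 • pderiv i.1 (ω (eraseIdx s i.2))
  map_add' ω η := by
    funext s
    simp [Finset.sum_add_distrib, smul_add]
  map_smul' c ω := by
    funext s
    simp only [Pi.smul_apply, RingHom.id_apply]
    rw [Finset.smul_sum]
    exact Finset.sum_congr rfl (fun i _ => by rw [(pderiv i.1).map_smul, smul_comm])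

/-- The Koszul operator `κ` (contraction with the position vector field). -/
noncomputable def koszul (n k : ℕ) : Form n (k+1) →ₗ[ℝ] Form n k where
  toFun ω := fun s =>
    ∑ i ∈ (s.1ᶜ).attach, sgn s.1 i.1 • (X i.1 * ω (insertIdx s (Finset.mem_compl.mp i.2)))
  map_add' ω η := by
    funext s
    simp [Finset.sum_add_distrib, mul_add, smul_add]
  map_smul' c ω := by
    funext s
    simp only [Pi.smul_apply, RingHom.id_apply, mul_smul_comm]
    rw [Finset.smul_sum]
    exact Finset.sum_congr rfl (fun i _ => (smul_comm _ _ _))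

/-- The codifferential `δ_{k+1}` (the formal adjoint of `d^k` on Euclidean `ℝⁿ`,
which coincides with `(-1)^{(k+1)n} ⋆ d^{n-k-1} ⋆`). -/
noncomputable def codiff (n k : ℕ) : Form n (k+1) →ₗ[ℝ] Form n k where
  toFun ω := fun s =>
    -∑ i ∈ (s.1ᶜ).attach, sgn s.1 i.1 • pderiv i.1 (ω (insertIdx s (Finset.mem_compl.mp i.2)))
  map_add' ω η := by
    funext s
    simp [Finset.sum_add_distrib, smul_add]
    ring
  map_smul' c ω := by
    funext s
    simp only [Pi.smul_apply, RingHom.id_apply, smul_neg, neg_inj]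
    rw [Finset.smul_sum]
    exact Finset.sum_congr rfl (fun i _ => by rw [(pderiv i.1).map_smul, smul_comm])

/-- The operator `κ^δ = ⋆ ∘ κ ∘ ⋆` (exterior multiplication by `Σ xᵢ dxⁱ`, up to sign). -/
noncomputable def kappaDelta (n k : ℕ) : Form n k →ₗ[ℝ] Form n (k+1) where
  toFun ω := fun s => ∑ i ∈ s.1.attach, sgn s.1 i.1 • (X i.1 * ω (eraseIdx s i.2))
  map_add' ω η := by
    funext s
    simp [Finset.sum_add_distrib, mul_add, smul_add]
  map_smul' c ω := by
    funext s
    simp only [Pi.smul_apply, RingHom.id_apply, mul_smul_comm]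
    rw [Finset.smul_sum]
    exact Finset.sum_congr rfl (fun i _ => (smul_comm _ _ _))

/-- Sign of the permutation `(t, tᶜ) ↦ (1,…,n)`, i.e. `⋆ dx^t = starSign t · dx^{tᶜ}`. -/
noncomputable def starSign {n : ℕ} (t : Finset (Fin n)) : ℝ :=
  (-1) ^ (∑ i ∈ t, ((tᶜ).filter (· < i)).card)

/-- The Hodge star operator on `k`-forms on `ℝⁿ`, `k + l = n`. -/
noncomputable def hodge (n k l : ℕ) (h : k + l = n) : Form n k →ₗ[ℝ] Form n l where
  toFun ω := fun s => starSign (s.1ᶜ) •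
    ω ⟨s.1ᶜ, by rw [Finset.card_compl, s.2, Fintype.card_fin]; omega⟩
  map_add' ω η := by funext s; simp [smul_add]
  map_smul' c ω := by funext s; simp only [Pi.smul_apply, RingHom.id_apply]; rw [smul_comm]

/-- The monomial form `x_τ dx^σ`. -/
noncomputable def monForm (n k : ℕ) (τ : Finset (Fin n)) (σ : Idx n k) : Form n k :=
  fun s => if s = σ then ∏ i ∈ τ, X i else 0

/-- `Q_1^-Λ^k = span{ x_τ dx^σ : |σ| = k, 0 ≤ |τ| ≤ n-k, τ ⊆ σᶜ }`. -/
noncomputable def Qm (n k : ℕ) : Submodule ℝ (Form n k) :=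
  Submodule.span ℝ
    {ω | ∃ (τ : Finset (Fin n)) (σ : Idx n k), τ.card ≤ n - k ∧ τ ⊆ (σ.1)ᶜ ∧ ω = monForm n k τ σ}

/-- `Q_1^{*,-}Λ^k = span{ x_τ' dx^σ' : |σ'| = k, 0 ≤ |τ'| ≤ k, τ' ⊆ σ' }`. -/
noncomputable def Qs (n k : ℕ) : Submodule ℝ (Form n k) :=
  Submodule.span ℝ
    {ω | ∃ (τ : Finset (Fin n)) (σ : Idx n k), τ.card ≤ k ∧ τ ⊆ σ.1 ∧ ω = monForm n k τ σ}

/-- `P_0Λ^k`: forms with constant coefficients. -/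
noncomputable def P0 (n k : ℕ) : Submodule ℝ (Form n k) :=
  Submodule.span ℝ {ω | ∃ σ : Idx n k, ω = monForm n k ∅ σ}

/-- The Whitney space `P_1^-Λ^k = P_0Λ^k + κ(P_0Λ^{k+1})`. -/
noncomputable def Pm (n k : ℕ) : Submodule ℝ (Form n k) :=
  P0 n k ⊔ Submodule.map (koszul n k) (P0 n (k+1))

/-- The star Whitney space `P_1^{*,-}Λ^{k+1} = P_0Λ^{k+1} + κ^δ(P_0Λ^k)`. -/
noncomputable def PsS (n k : ℕ) : Submodule ℝ (Form n (k+1)) :=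
  P0 n (k+1) ⊔ Submodule.map (kappaDelta n k) (P0 n k)

/-- `L²` inner product of `k`-forms on the centered box `[-r, r]`. -/
noncomputable def binner (n k : ℕ) (r : Fin n → ℝ) (ω η : Form n k) : ℝ :=
  ∑ s : Idx n k, ∫ x in Set.Icc (fun i => -(r i)) r, eval x (ω s * η s)

/-- `L²` inner product of `k`-forms on the reference cube `T = [-1,1]ⁿ`. -/
noncomputable def finner (n k : ℕ) (ω η : Form n k) : ℝ :=
  binner n k (fun _ => (1 : ℝ)) ω η

/-- The `HΛ^k(K)` norm on the reference cube: `‖μ‖² = ‖μ‖²_{L²Λ^k} + ‖d^k μ‖²_{L²Λ^{k+1}}`. -/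
noncomputable def hnorm (n k : ℕ) (ω : Form n k) : ℝ :=
  Real.sqrt (finner n k ω ω + finner n (k+1) (extd n k ω) (extd n k ω))


section Aux

open MvPolynomial Finset MeasureTheory

/-- Form with constant coefficients. -/
noncomputable def constForm (n m : ℕ) (c : Idx n m → ℝ) : Form n m := fun s => C (c s)

lemma sgn_mul_self {n : ℕ} (s : Finset (Fin n)) (i : Fin n) : sgn s i * sgn s i = 1 := by
  unfold sgn
  rw [← pow_add]
  exact Even.neg_one_pow ⟨_, rfl⟩

lemma sgn_erase {n : ℕ} (s : Finset (Fin n)) (i : Fin n) : sgn (s.erase i) i = sgn s i := by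
  unfold sgn
  congr 2
  ext j
  simp only [Finset.mem_filter, Finset.mem_erase]
  constructor
  · rintro ⟨⟨_, hj⟩, h⟩; exact ⟨hj, h⟩
  · rintro ⟨hj, h⟩; exact ⟨⟨ne_of_lt h, hj⟩, h⟩

lemma sgn_insert {n : ℕ} (s : Finset (Fin n)) (i : Fin n) : sgn (insert i s) i = sgn s i := by
  unfold sgn
  congr 2
  ext j
  simp only [Finset.mem_filter, Finset.mem_insert]
  constructor
  · rintro ⟨h1, h2⟩
    rcases h1 with h1 | h1
    · exact absurd (h1 ▸ h2) (lt_irrefl i)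
    · exact ⟨h1, h2⟩
  · rintro ⟨h1, h2⟩; exact ⟨Or.inr h1, h2⟩

lemma extd_const (n m : ℕ) (c : Idx n m → ℝ) : extd n m (constForm n m c) = 0 := by
  funext s
  simp [extd, constForm]

lemma codiff_const (n k : ℕ) (c : Idx n (k+1) → ℝ) :
    codiff n k (constForm n (k+1) c) = 0 := by
  funext s
  simp [codiff, constForm]

lemma extd_koszul_const (n k : ℕ) (b : Idx n (k+1) → ℝ) :
    extd n k (koszul n k (constForm n (k+1) b)) = ((k : ℝ) + 1) • constForm n (k+1) b := by
  funext s
  simp only [extd, koszul, LinearMap.coe_mk, AddHom.coe_mk, constForm, Pi.smul_apply]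
  have key : ∀ i : {x // x ∈ s.1},
      sgn s.1 i.1 • (pderiv i.1 (∑ j ∈ ((eraseIdx s i.2).1ᶜ).attach,
        sgn (eraseIdx s i.2).1 j.1 •
          (X j.1 * C (b (insertIdx (eraseIdx s i.2) (Finset.mem_compl.mp j.2))))))
      = C (b s) := by
    intro i
    rw [map_sum]
    have hmem : i.1 ∈ (eraseIdx s i.2).1ᶜ := by
      simp [eraseIdx, Finset.mem_compl]
    rw [Finset.sum_eq_single_of_mem ⟨i.1, hmem⟩ (Finset.mem_attach _ _)]
    · have heq : insertIdx (eraseIdx s i.2) (Finset.mem_compl.mp hmem) = s := by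
        apply Subtype.ext
        exact Finset.insert_erase i.2
      rw [heq]
      show sgn s.1 i.1 • (pderiv i.1 (sgn (eraseIdx s i.2).1 i.1 • (X i.1 * C (b s)))) = C (b s)
      have hsgn : sgn ((eraseIdx s i.2).1) (i.1) = sgn s.1 i.1 := sgn_erase s.1 i.1
      rw [Derivation.map_smul, hsgn, smul_smul, sgn_mul_self, one_smul]
      simp [pderiv_mul, pderiv_C, pderiv_X_self]
    · intro j _ hj
      have hji : j.1 ≠ i.1 := by
        intro h
        exact hj (Subtype.ext h)
      rw [Derivation.map_smul]
      have : pderiv i.1 (X j.1 * C (b (insertIdx (eraseIdx s i.2) (Finset.mem_compl.mp j.2)))) = 0 := by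
        simp [pderiv_mul, pderiv_C, pderiv_X_of_ne hji]
      rw [this, smul_zero]
  rw [Finset.sum_congr rfl (fun i _ => key i)]
  rw [Finset.sum_const, Finset.card_attach, s.2]
  rw [nsmul_eq_mul, ← C_eq_coe_nat, ← C_mul, smul_eq_C_mul, ← C_mul]
  congr 1
  push_cast
  ring

lemma codiff_kappaDelta_const (n k : ℕ) (e : Idx n k → ℝ) :
    codiff n k (kappaDelta n k (constForm n k e))
      = (-((n : ℝ) - (k : ℝ))) • constForm n k e := by
  funext s
  simp only [codiff, kappaDelta, LinearMap.coe_mk, AddHom.coe_mk, constForm, Pi.smul_apply]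
  have key : ∀ i : {x // x ∈ s.1ᶜ},
      sgn s.1 i.1 • (pderiv i.1 (∑ j ∈ (insertIdx s (Finset.mem_compl.mp i.2)).1.attach,
        sgn (insertIdx s (Finset.mem_compl.mp i.2)).1 j.1 •
          (X j.1 * C (e (eraseIdx (insertIdx s (Finset.mem_compl.mp i.2)) j.2)))))
      = C (e s) := by
    intro i
    rw [map_sum]
    have hins : i.1 ∉ s.1 := Finset.mem_compl.mp i.2
    have hmem : i.1 ∈ (insertIdx s hins).1 := Finset.mem_insert_self _ _
    rw [Finset.sum_eq_single_of_mem ⟨i.1, hmem⟩ (Finset.mem_attach _ _)]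
    · have heq : eraseIdx (insertIdx s hins) hmem = s := by
        apply Subtype.ext
        exact Finset.erase_insert hins
      rw [heq]
      have hsgn : sgn ((insertIdx s hins).1) (i.1) = sgn s.1 i.1 := sgn_insert s.1 i.1
      rw [Derivation.map_smul, hsgn, smul_smul, sgn_mul_self, one_smul]
      simp [pderiv_mul, pderiv_C, pderiv_X_self]
    · intro j _ hj
      have hji : j.1 ≠ i.1 := by
        intro h
        exact hj (Subtype.ext h)
      rw [Derivation.map_smul]
      have : pderiv i.1 (X j.1 * C (e (eraseIdx (insertIdx s hins) j.2))) = 0 := by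
        simp [pderiv_mul, pderiv_C, pderiv_X_of_ne hji]
      rw [this, smul_zero]
  rw [Finset.sum_congr rfl (fun i _ => key i)]
  rw [Finset.sum_const, Finset.card_attach]
  have hcard : s.1ᶜ.card = n - k := by
    rw [Finset.card_compl, s.2, Fintype.card_fin]
  rw [hcard, nsmul_eq_mul, ← C_eq_coe_nat, ← C_mul, smul_eq_C_mul, ← C_mul]
  rw [← C_neg]
  congr 1
  have h : k ≤ n := by
    have := Finset.card_le_univ s.1
    simpa [s.2] using this
  rw [Nat.cast_sub h]
  ring

lemma constForm_mem_P0 (n m : ℕ) (c : Idx n m → ℝ) : constForm n m c ∈ P0 n m := by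
  have hrep : constForm n m c = ∑ σ : Idx n m, c σ • monForm n m ∅ σ := by
    funext s
    rw [Finset.sum_apply]
    simp only [Pi.smul_apply, monForm, Finset.prod_empty, smul_ite, smul_zero]
    rw [Finset.sum_ite_eq Finset.univ s (fun σ => c σ • (1 : MvPolynomial (Fin n) ℝ))]
    simp [constForm, smul_eq_C_mul]
  rw [hrep]
  exact Submodule.sum_mem _ fun σ _ =>
    Submodule.smul_mem _ _ (Submodule.subset_span ⟨σ, rfl⟩)

/-- The linear map sending coefficient vectors to constant forms. -/
noncomputable def constFormL (n m : ℕ) : (Idx n m → ℝ) →ₗ[ℝ] Form n m where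
  toFun := constForm n m
  map_add' x y := by funext s; simp [constForm]
  map_smul' r x := by funext s; simp [constForm, smul_eq_C_mul]

lemma mem_P0_iff (n m : ℕ) (ω : Form n m) (h : ω ∈ P0 n m) :
    ∃ c : Idx n m → ℝ, ω = constForm n m c := by
  have hle : P0 n m ≤ LinearMap.range (constFormL n m) := by
    rw [P0, Submodule.span_le]
    rintro _ ⟨σ, rfl⟩
    refine ⟨(fun s => if s = σ then 1 else 0), ?_⟩
    funext s
    simp only [constFormL, LinearMap.coe_mk, AddHom.coe_mk, constForm, monForm,
      Finset.prod_empty]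
    split_ifs <;> simp
  obtain ⟨c, hc⟩ := hle h
  exact ⟨c, hc.symm⟩

lemma mem_Pm_decomp (n k : ℕ) (ρ : Form n k) (h : ρ ∈ Pm n k) :
    ∃ (a : Idx n k → ℝ) (b : Idx n (k+1) → ℝ),
      ρ = constForm n k a + koszul n k (constForm n (k+1) b) := by
  rw [Pm, Submodule.mem_sup] at h
  obtain ⟨y, hy, z, hz, rfl⟩ := h
  obtain ⟨w, hw, rfl⟩ := Submodule.mem_map.mp hz
  obtain ⟨a, rfl⟩ := mem_P0_iff n k y hy
  obtain ⟨b, rfl⟩ := mem_P0_iff n (k+1) w hw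
  exact ⟨a, b, rfl⟩

lemma constForm_mem_PsS (n k : ℕ) (c : Idx n (k+1) → ℝ) :
    constForm n (k+1) c ∈ PsS n k :=
  Submodule.mem_sup_left (constForm_mem_P0 n (k+1) c)

lemma kappaDelta_constForm_mem_PsS (n k : ℕ) (a : Idx n k → ℝ) :
    kappaDelta n k (constForm n k a) ∈ PsS n k :=
  Submodule.mem_sup_right (Submodule.mem_map_of_mem (constForm_mem_P0 n k a))

/-- The reference box `[-1,1]^n`. -/
noncomputable abbrev refBox (n : ℕ) : Set (Fin n → ℝ) :=
  Set.Icc (fun _ => (-1 : ℝ)) (fun _ => (1 : ℝ))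

lemma finner_eq_sum (n m : ℕ) (ω η : Form n m) :
    finner n m ω η = ∑ s : Idx n m, ∫ x in refBox n, eval x (ω s * η s) := rfl

lemma integrableOn_eval (n : ℕ) (p : MvPolynomial (Fin n) ℝ) :
    IntegrableOn (fun x => eval x p) (refBox n) :=
  (MvPolynomial.continuous_eval p).integrableOn_Icc

lemma volume_refBox (n : ℕ) : (volume (refBox n)).toReal = 2 ^ n := by
  rw [Real.volume_Icc_pi_toReal (by intro i; norm_num)]
  simp
  norm_num

lemma finner_add_left (n m : ℕ) (ω η ζ : Form n m) :
    finner n m (ω + η) ζ = finner n m ω ζ + finner n m η ζ := by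
  rw [finner_eq_sum, finner_eq_sum, finner_eq_sum, ← Finset.sum_add_distrib]
  refine Finset.sum_congr rfl fun s _ => ?_
  have : ∀ x, eval x ((ω + η) s * ζ s) = eval x (ω s * ζ s) + eval x (η s * ζ s) := by
    intro x
    simp [add_mul]
  rw [MeasureTheory.integral_congr_ae (Filter.Eventually.of_forall fun x => this x)]
  exact MeasureTheory.integral_add (integrableOn_eval n _) (integrableOn_eval n _)

lemma finner_smul_left (n m : ℕ) (c : ℝ) (ω ζ : Form n m) :
    finner n m (c • ω) ζ = c * finner n m ω ζ := by
  rw [finner_eq_sum, finner_eq_sum, Finset.mul_sum]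
  refine Finset.sum_congr rfl fun s _ => ?_
  have : ∀ x, eval x ((c • ω) s * ζ s) = c * eval x (ω s * ζ s) := by
    intro x
    simp [smul_eq_C_mul, mul_assoc]
  rw [MeasureTheory.integral_congr_ae (Filter.Eventually.of_forall fun x => this x)]
  exact MeasureTheory.integral_const_mul c _

lemma finner_comm (n m : ℕ) (ω η : Form n m) : finner n m ω η = finner n m η ω := by
  rw [finner_eq_sum, finner_eq_sum]
  refine Finset.sum_congr rfl fun s _ => ?_
  rw [mul_comm]

lemma finner_nonneg (n m : ℕ) (ω : Form n m) : 0 ≤ finner n m ω ω := by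
  rw [finner_eq_sum]
  refine Finset.sum_nonneg fun s _ => ?_
  refine MeasureTheory.setIntegral_nonneg measurableSet_Icc fun x _ => ?_
  rw [map_mul]
  exact mul_self_nonneg _

lemma finner_zero_right (n m : ℕ) (ω : Form n m) : finner n m ω 0 = 0 := by
  rw [finner_eq_sum]
  refine Finset.sum_eq_zero fun s _ => ?_
  simp

lemma finner_neg_left (n m : ℕ) (ω ζ : Form n m) :
    finner n m (-ω) ζ = -finner n m ω ζ := by
  have := finner_smul_left n m (-1) ω ζ
  simpa using this

lemma finner_sub_left (n m : ℕ) (ω η ζ : Form n m) :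
    finner n m (ω - η) ζ = finner n m ω ζ - finner n m η ζ := by
  rw [sub_eq_add_neg, finner_add_left, finner_neg_left, sub_eq_add_neg]

lemma finner_add_right (n m : ℕ) (ω η ζ : Form n m) :
    finner n m ζ (ω + η) = finner n m ζ ω + finner n m ζ η := by
  rw [finner_comm, finner_add_left, finner_comm n m ω, finner_comm n m η]

lemma finner_smul_right (n m : ℕ) (c : ℝ) (ω ζ : Form n m) :
    finner n m ζ (c • ω) = c * finner n m ζ ω := by
  rw [finner_comm, finner_smul_left, finner_comm]

lemma finner_diag_const (n m : ℕ) (c : Idx n m → ℝ) :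
    finner n m (constForm n m c) (constForm n m c) = 2 ^ n * ∑ s : Idx n m, (c s) ^ 2 := by
  rw [finner_eq_sum, Finset.mul_sum]
  refine Finset.sum_congr rfl fun s _ => ?_
  have : ∀ x : Fin n → ℝ, eval x (constForm n m c s * constForm n m c s) = (c s) ^ 2 := by
    intro x
    simp [constForm, sq]
  rw [MeasureTheory.integral_congr_ae (Filter.Eventually.of_forall this),
    MeasureTheory.setIntegral_const, measureReal_def, volume_refBox]
  simp [mul_comm]

section BilinearCS

variable {M : Type*} [AddCommGroup M] [Module ℝ M] (F : M → M → ℝ)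
variable (hadd : ∀ x y z, F (x + y) z = F x z + F y z)
variable (hsmul : ∀ (c : ℝ) (x y : M), F (c • x) y = c * F x y)
variable (hcomm : ∀ x y, F x y = F y x)
variable (hnn : ∀ x, 0 ≤ F x x)

include hadd hsmul hcomm hnn in
lemma bilin_cauchy_schwarz (x y : M) : F x y ^ 2 ≤ F x x * F y y := by
  have hexp : ∀ t : ℝ, F (x + t • y) (x + t • y)
      = F y y * (t * t) + (2 * F x y) * t + F x x := by
    intro t
    rw [hadd]
    rw [hcomm x (x + t • y), hcomm (t • y) (x + t • y)]
    rw [hadd, hadd]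
    rw [hsmul, hcomm x (t • y), hsmul, hsmul, hcomm y x, hcomm y (t • y), hsmul]
    ring
  have h := discrim_le_zero (a := F y y) (b := 2 * F x y) (c := F x x)
    (fun t => by rw [← hexp t]; exact hnn _)
  rw [discrim] at h
  nlinarith [h]

include hadd hsmul hcomm hnn in
lemma bilin_abs_le (x y : M) :
    |F x y| ≤ Real.sqrt (F x x) * Real.sqrt (F y y) := by
  have h := bilin_cauchy_schwarz F hadd hsmul hcomm hnn x y
  have : |F x y| = Real.sqrt (F x y ^ 2) := by
    rw [Real.sqrt_sq_eq_abs]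
  rw [this, ← Real.sqrt_mul (hnn x)]
  exact Real.sqrt_le_sqrt h

include hadd hsmul hcomm hnn in
lemma bilin_sqrt_triangle (x y : M) :
    Real.sqrt (F (x + y) (x + y)) ≤ Real.sqrt (F x x) + Real.sqrt (F y y) := by
  have hxy : F x y ≤ Real.sqrt (F x x) * Real.sqrt (F y y) :=
    le_trans (le_abs_self _) (bilin_abs_le F hadd hsmul hcomm hnn x y)
  have hexp : F (x + y) (x + y) = F x x + 2 * F x y + F y y := by
    rw [hadd, hcomm x (x + y), hcomm y (x + y), hadd, hadd, hcomm y x]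
    ring
  have h1 : F (x + y) (x + y) ≤ (Real.sqrt (F x x) + Real.sqrt (F y y)) ^ 2 := by
    rw [hexp, add_sq, Real.sq_sqrt (hnn x), Real.sq_sqrt (hnn y)]
    nlinarith [hxy]
  calc Real.sqrt (F (x + y) (x + y))
      ≤ Real.sqrt ((Real.sqrt (F x x) + Real.sqrt (F y y)) ^ 2) := Real.sqrt_le_sqrt h1
    _ = Real.sqrt (F x x) + Real.sqrt (F y y) := by
        rw [Real.sqrt_sq (by positivity)]

end BilinearCS

lemma pow_two_mul_pow_two (n : ℕ) : (2:ℝ)^n * 2^n = 4^n := by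
  rw [← mul_pow]; norm_num

lemma card_idx_le (n m : ℕ) : (Fintype.card (Idx n m) : ℝ) ≤ 2^n := by
  have h := Fintype.card_subtype_le (fun s : Finset (Fin n) => s.card = m)
  rw [Fintype.card_finset, Fintype.card_fin] at h
  exact_mod_cast h

set_option maxHeartbeats 1000000 in
lemma finner_kappaDelta_const_le (n k : ℕ) (c : Idx n k → ℝ) :
    finner n (k+1) (kappaDelta n k (constForm n k c)) (kappaDelta n k (constForm n k c))
      ≤ ((n:ℝ)+1) * 4 ^ n * ∑ τ : Idx n k, (c τ)^2 := by
  set P := ∑ τ : Idx n k, (c τ)^2 with hP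
  have hPnn : 0 ≤ P := Finset.sum_nonneg fun τ _ => sq_nonneg _
  rw [finner_eq_sum]
  have hbound : ∀ s : Idx n (k+1),
      (∫ x in refBox n, eval x ((kappaDelta n k (constForm n k c)) s
        * (kappaDelta n k (constForm n k c)) s))
        ≤ 2^n * (((n:ℝ)+1) * P) := by
    intro s
    have hsum : ∀ x : Fin n → ℝ,
        eval x ((kappaDelta n k (constForm n k c)) s)
          = ∑ i ∈ s.1.attach, sgn s.1 i.1 * (x i.1 * c (eraseIdx s i.2)) := by
      intro x
      simp only [kappaDelta, LinearMap.coe_mk, AddHom.coe_mk, constForm]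
      rw [map_sum]
      refine Finset.sum_congr rfl fun i _ => ?_
      rw [smul_eq_C_mul]
      simp
    have hpt : ∀ x ∈ refBox n,
        eval x ((kappaDelta n k (constForm n k c)) s * (kappaDelta n k (constForm n k c)) s)
          ≤ ((n:ℝ)+1) * P := by
      intro x hx
      rw [map_mul, hsum x]
      obtain ⟨hx1, hx2⟩ := hx
      have hxb : ∀ i : Fin n, (x i)^2 ≤ 1 := by
        intro i
        have h1 : -1 ≤ x i := hx1 i
        have h2 : x i ≤ 1 := hx2 i
        nlinarith
      have h1 : (∑ i ∈ s.1.attach, sgn s.1 i.1 * (x i.1 * c (eraseIdx s i.2)))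
          * (∑ i ∈ s.1.attach, sgn s.1 i.1 * (x i.1 * c (eraseIdx s i.2)))
          ≤ (s.1.attach.card : ℝ)
            * ∑ i ∈ s.1.attach, (sgn s.1 i.1 * (x i.1 * c (eraseIdx s i.2)))^2 := by
        rw [← sq]
        exact sq_sum_le_card_mul_sum_sq
      have h2 : ∑ i ∈ s.1.attach, (sgn s.1 i.1 * (x i.1 * c (eraseIdx s i.2)))^2
          ≤ ∑ i ∈ s.1.attach, (c (eraseIdx s i.2))^2 := by
        refine Finset.sum_le_sum fun i _ => ?_
        have hsg : (sgn s.1 i.1)^2 = 1 := by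
          rw [sq]; exact sgn_mul_self _ _
        have hxs := hxb i.1
        have hcs := sq_nonneg (c (eraseIdx s i.2))
        have hxs0 := sq_nonneg (x i.1)
        calc (sgn s.1 i.1 * (x i.1 * c (eraseIdx s i.2)))^2
            = (sgn s.1 i.1)^2 * ((x i.1)^2 * (c (eraseIdx s i.2))^2) := by ring
          _ = (x i.1)^2 * (c (eraseIdx s i.2))^2 := by rw [hsg, one_mul]
          _ ≤ 1 * (c (eraseIdx s i.2))^2 := by
              exact mul_le_mul_of_nonneg_right hxs hcs
          _ = (c (eraseIdx s i.2))^2 := one_mul _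
      have h3 : ∑ i ∈ s.1.attach, (c (eraseIdx s i.2))^2 ≤ P := by
        rw [hP]
        have hinj : Set.InjOn (fun i : {x // x ∈ s.1} => eraseIdx s i.2) s.1.attach := by
          intro i _ j _ hij
          apply Subtype.ext
          by_contra hne
          have hmem : i.1 ∈ s.1.erase j.1 := Finset.mem_erase.mpr ⟨hne, i.2⟩
          have heq : s.1.erase j.1 = s.1.erase i.1 := congrArg Subtype.val hij.symm
          rw [heq] at hmem
          exact (Finset.notMem_erase i.1 s.1) hmem
        rw [← Finset.sum_image (f := fun τ : Idx n k => (c τ)^2) hinj]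
        exact Finset.sum_le_sum_of_subset_of_nonneg (Finset.subset_univ _)
          fun τ _ _ => sq_nonneg _
      have hcard : (s.1.attach.card : ℝ) ≤ (n:ℝ) + 1 := by
        have h4 : s.1.attach.card ≤ n := by
          rw [Finset.card_attach]
          simpa using Finset.card_le_univ s.1
        have := (Nat.cast_le (α := ℝ)).mpr h4
        linarith
      have hnn2 : (0:ℝ) ≤ ∑ i ∈ s.1.attach, (c (eraseIdx s i.2))^2 :=
        Finset.sum_nonneg fun i _ => sq_nonneg _
      calc (∑ i ∈ s.1.attach, sgn s.1 i.1 * (x i.1 * c (eraseIdx s i.2)))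
            * (∑ i ∈ s.1.attach, sgn s.1 i.1 * (x i.1 * c (eraseIdx s i.2)))
          ≤ (s.1.attach.card : ℝ)
            * ∑ i ∈ s.1.attach, (sgn s.1 i.1 * (x i.1 * c (eraseIdx s i.2)))^2 := h1
        _ ≤ (s.1.attach.card : ℝ) * ∑ i ∈ s.1.attach, (c (eraseIdx s i.2))^2 :=
            mul_le_mul_of_nonneg_left h2 (by positivity)
        _ ≤ ((n:ℝ)+1) * P := mul_le_mul hcard h3 hnn2 (by positivity)
    have hconst : IntegrableOn (fun _ : Fin n → ℝ => ((n:ℝ)+1) * P) (refBox n) := by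
      refine (integrableOn_const_iff (by finiteness)).mpr (Or.inr ?_)
      exact (isCompact_Icc).measure_lt_top
    have hint := MeasureTheory.setIntegral_mono_on (integrableOn_eval n _) hconst
      measurableSet_Icc hpt
    calc (∫ x in refBox n, eval x ((kappaDelta n k (constForm n k c)) s
          * (kappaDelta n k (constForm n k c)) s))
        ≤ ∫ _x in refBox n, ((n:ℝ)+1) * P := hint
      _ = 2^n * (((n:ℝ)+1) * P) := by
          rw [MeasureTheory.setIntegral_const, measureReal_def, volume_refBox]
          simp
  calc ∑ s : Idx n (k+1), ∫ x in refBox n, eval x ((kappaDelta n k (constForm n k c)) s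
        * (kappaDelta n k (constForm n k c)) s)
      ≤ ∑ _s : Idx n (k+1), 2^n * (((n:ℝ)+1) * P) := Finset.sum_le_sum fun s _ => hbound s
    _ = (Fintype.card (Idx n (k+1)) : ℝ) * (2^n * (((n:ℝ)+1) * P)) := by
        rw [Finset.sum_const, Finset.card_univ, nsmul_eq_mul]
    _ ≤ 2^n * (2^n * (((n:ℝ)+1) * P)) :=
        mul_le_mul_of_nonneg_right (card_idx_le n (k+1)) (by positivity)
    _ = ((n:ℝ)+1) * 4^n * P := by
        rw [show (2:ℝ)^n * (2^n * (((n:ℝ)+1) * P)) = ((n:ℝ)+1) * (2^n*2^n) * P by ring,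
          pow_two_mul_pow_two]

set_option maxHeartbeats 1000000 in
lemma finner_koszul_const_le (n k : ℕ) (b : Idx n (k+1) → ℝ) :
    finner n k (koszul n k (constForm n (k+1) b)) (koszul n k (constForm n (k+1) b))
      ≤ ((n:ℝ)+1) * 4 ^ n * ∑ τ : Idx n (k+1), (b τ)^2 := by
  set P := ∑ τ : Idx n (k+1), (b τ)^2 with hP
  have hPnn : 0 ≤ P := Finset.sum_nonneg fun τ _ => sq_nonneg _
  rw [finner_eq_sum]
  have hbound : ∀ s : Idx n k,
      (∫ x in refBox n, eval x ((koszul n k (constForm n (k+1) b)) s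
        * (koszul n k (constForm n (k+1) b)) s))
        ≤ 2^n * (((n:ℝ)+1) * P) := by
    intro s
    have hsum : ∀ x : Fin n → ℝ,
        eval x ((koszul n k (constForm n (k+1) b)) s)
          = ∑ i ∈ s.1ᶜ.attach,
              sgn s.1 i.1 * (x i.1 * b (insertIdx s (Finset.mem_compl.mp i.2))) := by
      intro x
      simp only [koszul, LinearMap.coe_mk, AddHom.coe_mk, constForm]
      rw [map_sum]
      refine Finset.sum_congr rfl fun i _ => ?_
      rw [smul_eq_C_mul]
      simp
    have hpt : ∀ x ∈ refBox n,
        eval x ((koszul n k (constForm n (k+1) b)) s * (koszul n k (constForm n (k+1) b)) s)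
          ≤ ((n:ℝ)+1) * P := by
      intro x hx
      rw [map_mul, hsum x]
      obtain ⟨hx1, hx2⟩ := hx
      have hxb : ∀ i : Fin n, (x i)^2 ≤ 1 := by
        intro i
        have h1 : -1 ≤ x i := hx1 i
        have h2 : x i ≤ 1 := hx2 i
        nlinarith
      have h1 : (∑ i ∈ s.1ᶜ.attach, sgn s.1 i.1 * (x i.1 * b (insertIdx s (Finset.mem_compl.mp i.2))))
          * (∑ i ∈ s.1ᶜ.attach, sgn s.1 i.1 * (x i.1 * b (insertIdx s (Finset.mem_compl.mp i.2))))
          ≤ (s.1ᶜ.attach.card : ℝ)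
            * ∑ i ∈ s.1ᶜ.attach, (sgn s.1 i.1 * (x i.1 * b (insertIdx s (Finset.mem_compl.mp i.2))))^2 := by
        rw [← sq]
        exact sq_sum_le_card_mul_sum_sq
      have h2 : ∑ i ∈ s.1ᶜ.attach, (sgn s.1 i.1 * (x i.1 * b (insertIdx s (Finset.mem_compl.mp i.2))))^2
          ≤ ∑ i ∈ s.1ᶜ.attach, (b (insertIdx s (Finset.mem_compl.mp i.2)))^2 := by
        refine Finset.sum_le_sum fun i _ => ?_
        have hsg : (sgn s.1 i.1)^2 = 1 := by
          rw [sq]; exact sgn_mul_self _ _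
        have hxs := hxb i.1
        have hcs := sq_nonneg (b (insertIdx s (Finset.mem_compl.mp i.2)))
        calc (sgn s.1 i.1 * (x i.1 * b (insertIdx s (Finset.mem_compl.mp i.2))))^2
            = (sgn s.1 i.1)^2 * ((x i.1)^2 * (b (insertIdx s (Finset.mem_compl.mp i.2)))^2) := by
              ring
          _ = (x i.1)^2 * (b (insertIdx s (Finset.mem_compl.mp i.2)))^2 := by rw [hsg, one_mul]
          _ ≤ 1 * (b (insertIdx s (Finset.mem_compl.mp i.2)))^2 :=
              mul_le_mul_of_nonneg_right hxs hcs
          _ = (b (insertIdx s (Finset.mem_compl.mp i.2)))^2 := one_mul _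
      have h3 : ∑ i ∈ s.1ᶜ.attach, (b (insertIdx s (Finset.mem_compl.mp i.2)))^2 ≤ P := by
        rw [hP]
        have hinj : Set.InjOn (fun i : {x // x ∈ s.1ᶜ} => insertIdx s (Finset.mem_compl.mp i.2))
            s.1ᶜ.attach := by
          intro i _ j _ hij
          apply Subtype.ext
          have heq : insert i.1 s.1 = insert j.1 s.1 := congrArg Subtype.val hij
          have hi : i.1 ∈ insert j.1 s.1 := heq ▸ Finset.mem_insert_self i.1 s.1
          rcases Finset.mem_insert.mp hi with h | h
          · exact h
          · exact absurd h (Finset.mem_compl.mp i.2)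
        rw [← Finset.sum_image (f := fun τ : Idx n (k+1) => (b τ)^2) hinj]
        exact Finset.sum_le_sum_of_subset_of_nonneg (Finset.subset_univ _)
          fun τ _ _ => sq_nonneg _
      have hcard : (s.1ᶜ.attach.card : ℝ) ≤ (n:ℝ) + 1 := by
        have h4 : s.1ᶜ.attach.card ≤ n := by
          rw [Finset.card_attach]
          simpa using Finset.card_le_univ s.1ᶜ
        have := (Nat.cast_le (α := ℝ)).mpr h4
        linarith
      have hnn2 : (0:ℝ) ≤ ∑ i ∈ s.1ᶜ.attach, (b (insertIdx s (Finset.mem_compl.mp i.2)))^2 :=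
        Finset.sum_nonneg fun i _ => sq_nonneg _
      calc (∑ i ∈ s.1ᶜ.attach, sgn s.1 i.1 * (x i.1 * b (insertIdx s (Finset.mem_compl.mp i.2))))
            * (∑ i ∈ s.1ᶜ.attach, sgn s.1 i.1 * (x i.1 * b (insertIdx s (Finset.mem_compl.mp i.2))))
          ≤ (s.1ᶜ.attach.card : ℝ)
            * ∑ i ∈ s.1ᶜ.attach, (sgn s.1 i.1 * (x i.1 * b (insertIdx s (Finset.mem_compl.mp i.2))))^2 := h1
        _ ≤ (s.1ᶜ.attach.card : ℝ)
            * ∑ i ∈ s.1ᶜ.attach, (b (insertIdx s (Finset.mem_compl.mp i.2)))^2 :=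
            mul_le_mul_of_nonneg_left h2 (by positivity)
        _ ≤ ((n:ℝ)+1) * P := mul_le_mul hcard h3 hnn2 (by positivity)
    have hconst : IntegrableOn (fun _ : Fin n → ℝ => ((n:ℝ)+1) * P) (refBox n) := by
      refine (integrableOn_const_iff (by finiteness)).mpr (Or.inr ?_)
      exact (isCompact_Icc).measure_lt_top
    have hint := MeasureTheory.setIntegral_mono_on (integrableOn_eval n _) hconst
      measurableSet_Icc hpt
    calc (∫ x in refBox n, eval x ((koszul n k (constForm n (k+1) b)) s
          * (koszul n k (constForm n (k+1) b)) s))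
        ≤ ∫ _x in refBox n, ((n:ℝ)+1) * P := hint
      _ = 2^n * (((n:ℝ)+1) * P) := by
          rw [MeasureTheory.setIntegral_const, measureReal_def, volume_refBox]
          simp
  calc ∑ s : Idx n k, ∫ x in refBox n, eval x ((koszul n k (constForm n (k+1) b)) s
        * (koszul n k (constForm n (k+1) b)) s)
      ≤ ∑ _s : Idx n k, 2^n * (((n:ℝ)+1) * P) := Finset.sum_le_sum fun s _ => hbound s
    _ = (Fintype.card (Idx n k) : ℝ) * (2^n * (((n:ℝ)+1) * P)) := by
        rw [Finset.sum_const, Finset.card_univ, nsmul_eq_mul]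
    _ ≤ 2^n * (2^n * (((n:ℝ)+1) * P)) :=
        mul_le_mul_of_nonneg_right (card_idx_le n k) (by positivity)
    _ = ((n:ℝ)+1) * 4^n * P := by
        rw [show (2:ℝ)^n * (2^n * (((n:ℝ)+1) * P)) = ((n:ℝ)+1) * (2^n*2^n) * P by ring,
          pow_two_mul_pow_two]

/-- The mixed bilinear form of the adjoint projection. -/
noncomputable def Bf (n k : ℕ) (ν : Form n k) (μ : Form n (k+1)) : ℝ :=
  finner n (k+1) (extd n k ν) μ - finner n k ν (codiff n k μ)

lemma Bf_sub (n k : ℕ) (x y : Form n k) (μ : Form n (k+1)) :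
    Bf n k (x - y) μ = Bf n k x μ - Bf n k y μ := by
  unfold Bf
  rw [map_sub, finner_sub_left, finner_sub_left]
  ring

/-- The bilinear form associated to the `HΛ^k` norm. -/
noncomputable def Gf (n k : ℕ) (x y : Form n k) : ℝ :=
  finner n k x y + finner n (k+1) (extd n k x) (extd n k y)

lemma Gf_add_left (n k : ℕ) (x y z : Form n k) :
    Gf n k (x + y) z = Gf n k x z + Gf n k y z := by
  unfold Gf
  rw [map_add, finner_add_left, finner_add_left]
  ring

lemma Gf_smul_left (n k : ℕ) (c : ℝ) (x y : Form n k) :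
    Gf n k (c • x) y = c * Gf n k x y := by
  unfold Gf
  rw [LinearMap.map_smul, finner_smul_left, finner_smul_left]
  ring

lemma Gf_comm (n k : ℕ) (x y : Form n k) : Gf n k x y = Gf n k y x := by
  unfold Gf
  rw [finner_comm, finner_comm n (k+1)]

lemma Gf_nonneg (n k : ℕ) (x : Form n k) : 0 ≤ Gf n k x x :=
  add_nonneg (finner_nonneg n k x) (finner_nonneg n (k+1) _)

lemma hnorm_eq (n k : ℕ) (x : Form n k) : hnorm n k x = Real.sqrt (Gf n k x x) := rfl

lemma hnorm_nonneg (n k : ℕ) (x : Form n k) : 0 ≤ hnorm n k x := Real.sqrt_nonneg _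

lemma hnorm_triangle (n k : ℕ) (x y : Form n k) :
    hnorm n k (x + y) ≤ hnorm n k x + hnorm n k y := by
  rw [hnorm_eq, hnorm_eq, hnorm_eq]
  exact bilin_sqrt_triangle (Gf n k) (Gf_add_left n k) (Gf_smul_left n k)
    (Gf_comm n k) (Gf_nonneg n k) x y

lemma hnorm_neg (n k : ℕ) (x : Form n k) : hnorm n k (-x) = hnorm n k x := by
  rw [hnorm_eq, hnorm_eq]
  congr 1
  rw [show -x = (-1 : ℝ) • x by rw [neg_one_smul]]
  rw [Gf_smul_left, Gf_comm, Gf_smul_left, Gf_comm]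
  ring

lemma sqrt_finner_le_hnorm (n k : ℕ) (x : Form n k) :
    Real.sqrt (finner n k x x) ≤ hnorm n k x := by
  rw [hnorm_eq]
  exact Real.sqrt_le_sqrt (by unfold Gf; nlinarith [finner_nonneg n (k+1) (extd n k x)])

lemma sqrt_finner_extd_le_hnorm (n k : ℕ) (x : Form n k) :
    Real.sqrt (finner n (k+1) (extd n k x) (extd n k x)) ≤ hnorm n k x := by
  rw [hnorm_eq]
  exact Real.sqrt_le_sqrt (by unfold Gf; nlinarith [finner_nonneg n k x])

lemma finner_abs_le (n m : ℕ) (x y : Form n m) :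
    |finner n m x y| ≤ Real.sqrt (finner n m x x) * Real.sqrt (finner n m y y) :=
  bilin_abs_le (finner n m) (finner_add_left n m) (finner_smul_left n m)
    (finner_comm n m) (finner_nonneg n m) x y

lemma finner_sqrt_triangle (n m : ℕ) (x y : Form n m) :
    Real.sqrt (finner n m (x + y) (x + y))
      ≤ Real.sqrt (finner n m x x) + Real.sqrt (finner n m y y) :=
  bilin_sqrt_triangle (finner n m) (finner_add_left n m) (finner_smul_left n m)
    (finner_comm n m) (finner_nonneg n m) x y

end Aux

set_option maxHeartbeats 1000000 in
/-- Lemma 2.2, quasi-optimality. Let `I` be the adjoint projection onto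
`P_1^-Λ^k` on the cube `K = [-1,1]ⁿ`. There is a constant `C = C(k,n,K) > 0` such that
`‖ω - I ω‖_{HΛ^k(K)} ≤ C · inf_{η ∈ P_1^-Λ^k(K)} ‖ω - η‖_{HΛ^k(K)}` for all `ω`. -/
theorem stmt12 (n k : ℕ) (hk : k + 1 ≤ n)
    (I : Form n k → Form n k)
    (hI : ∀ ω : Form n k, I ω ∈ Pm n k ∧ ∀ μ ∈ PsS n k,
      finner n (k+1) (extd n k (I ω)) μ - finner n k (I ω) (codiff n k μ)
        = finner n (k+1) (extd n k ω) μ - finner n k ω (codiff n k μ)) :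
    ∃ C : ℝ, 0 < C ∧ ∀ ω : Form n k, ∀ η ∈ Pm n k,
      hnorm n k (ω - I ω) ≤ C * hnorm n k (ω - η) := by
  classical
  set D : ℝ := Real.sqrt (((n:ℝ)+1) * 4^n) with hD
  have hDnn : 0 ≤ D := Real.sqrt_nonneg _
  have hDsq : D^2 = ((n:ℝ)+1) * 4^n := Real.sq_sqrt (by positivity)
  set E : ℝ := D + n + 2*n*D with hE
  have hEnn : 0 ≤ E := by positivity
  set C2 : ℝ := E + D + ((n:ℝ)+1) with hC2
  have hC2nn : 0 ≤ C2 := by positivity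
  clear_value D E C2
  refine ⟨1 + C2, by linarith, ?_⟩
  intro ω η hη
  have hHnn : 0 ≤ hnorm n k (ω - η) := hnorm_nonneg n k _
  have hρPm : I ω - η ∈ Pm n k := sub_mem (hI ω).1 hη
  obtain ⟨a, b, hab⟩ := mem_Pm_decomp n k _ hρPm
  set ca := constForm n k a with hca
  set cb := constForm n (k+1) b with hcb
  set Δ := ω - η with hΔ
  set ρ := I ω - η with hρ
  set H := hnorm n k Δ with hH
  clear_value ca cb Δ ρ H
  -- B equality
  have hB : ∀ μ ∈ PsS n k, Bf n k ρ μ = Bf n k Δ μ := by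
    intro μ hμ
    have h1 : Bf n k (I ω) μ = Bf n k ω μ := by
      unfold Bf
      exact (hI ω).2 μ hμ
    rw [hρ, hΔ, Bf_sub, Bf_sub, h1]
  set α := finner n k ca ca with hα
  set β := finner n (k+1) cb cb with hβ
  have hαnn : 0 ≤ α := finner_nonneg n k ca
  have hβnn : 0 ≤ β := finner_nonneg n (k+1) cb
  set u := Real.sqrt α with hu
  set v := Real.sqrt β with hv
  have hunn : 0 ≤ u := Real.sqrt_nonneg _
  have hvnn : 0 ≤ v := Real.sqrt_nonneg _
  have hu2 : u^2 = α := Real.sq_sqrt hαnn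
  have hv2 : v^2 = β := Real.sq_sqrt hβnn
  clear_value α β u v
  have hHd : Real.sqrt (finner n (k+1) (extd n k Δ) (extd n k Δ)) ≤ H := by
    rw [hH]; exact sqrt_finner_extd_le_hnorm n k Δ
  have hH0 : Real.sqrt (finner n k Δ Δ) ≤ H := by
    rw [hH]; exact sqrt_finner_le_hnorm n k Δ
  have hdρ : extd n k ρ = ((k:ℝ)+1) • cb := by
    rw [hab, hca, hcb, map_add, extd_const, extd_koszul_const, zero_add]
  have hone_le : (1:ℝ) ≤ 2^n := one_le_pow₀ (by norm_num)
  -- sums dominated by diagonal inner products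
  have hbsum : ∑ τ : Idx n (k+1), (b τ)^2 ≤ β := by
    have hd := finner_diag_const n (k+1) b
    have hs : 0 ≤ ∑ τ : Idx n (k+1), (b τ)^2 := Finset.sum_nonneg fun τ _ => sq_nonneg _
    rw [hβ, hcb, hd]
    nlinarith [mul_nonneg (by linarith [hone_le] : (0:ℝ) ≤ 2^n - 1) hs]
  have hasum : ∑ τ : Idx n k, (a τ)^2 ≤ α := by
    have hd := finner_diag_const n k a
    have hs : 0 ≤ ∑ τ : Idx n k, (a τ)^2 := Finset.sum_nonneg fun τ _ => sq_nonneg _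
    rw [hα, hca, hd]
    nlinarith [mul_nonneg (by linarith [hone_le] : (0:ℝ) ≤ 2^n - 1) hs]
  -- step 1 : v ≤ H
  have hstep1 : v ≤ H := by
    have hmem : cb ∈ PsS n k := by
      rw [hcb]; exact constForm_mem_PsS n k b
    have heq : Bf n k ρ cb = ((k:ℝ)+1) * β := by
      unfold Bf
      rw [hdρ, finner_smul_left, hcb, codiff_const, finner_zero_right, ← hcb, ← hβ]
      ring
    have hbd : |Bf n k Δ cb| ≤ H * v := by
      unfold Bf
      rw [hcb, codiff_const, finner_zero_right, ← hcb, sub_zero]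
      have h0 := finner_abs_le n (k+1) (extd n k Δ) cb
      rw [← hβ, ← hv] at h0
      calc |finner n (k+1) (extd n k Δ) cb|
          ≤ Real.sqrt (finner n (k+1) (extd n k Δ) (extd n k Δ)) * v := h0
        _ ≤ H * v := mul_le_mul_of_nonneg_right hHd hvnn
    have h3 : ((k:ℝ)+1) * β ≤ H * v := by
      rw [← heq, hB cb hmem]
      exact le_trans (le_abs_self _) hbd
    by_contra hc
    push_neg at hc
    have vpos : 0 < v := lt_of_le_of_lt hHnn hc
    have h9 : H * v < v * v := mul_lt_mul_of_pos_right hc vpos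
    have h10 : (0:ℝ) ≤ (k:ℝ) * β := mul_nonneg (by positivity) hβnn
    have h11 : v * v = β := by rw [← hv2]; ring
    linarith [h3, h9, h10, h11]
  -- bounds on kappaDelta ca and koszul cb
  have hκδ : Real.sqrt (finner n (k+1) (kappaDelta n k ca) (kappaDelta n k ca)) ≤ D * u := by
    have h1 := finner_kappaDelta_const_le n k a
    have h2 : finner n (k+1) (kappaDelta n k ca) (kappaDelta n k ca) ≤ D^2 * α := by
      rw [hDsq, hca]
      have h3 := mul_le_mul_of_nonneg_left hasum
        (show (0:ℝ) ≤ ((n:ℝ)+1) * 4^n by positivity)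
      linarith [h1, h3]
    calc Real.sqrt (finner n (k+1) (kappaDelta n k ca) (kappaDelta n k ca))
        ≤ Real.sqrt (D^2 * α) := Real.sqrt_le_sqrt h2
      _ = D * u := by rw [Real.sqrt_mul (sq_nonneg D), Real.sqrt_sq hDnn, hu]
  have hκ : Real.sqrt (finner n k (koszul n k cb) (koszul n k cb)) ≤ D * v := by
    have h1 := finner_koszul_const_le n k b
    have h2 : finner n k (koszul n k cb) (koszul n k cb) ≤ D^2 * β := by
      rw [hDsq, hcb]
      have h3 := mul_le_mul_of_nonneg_left hbsum
        (show (0:ℝ) ≤ ((n:ℝ)+1) * 4^n by positivity)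
      linarith [h1, h3]
    calc Real.sqrt (finner n k (koszul n k cb) (koszul n k cb))
        ≤ Real.sqrt (D^2 * β) := Real.sqrt_le_sqrt h2
      _ = D * v := by rw [Real.sqrt_mul (sq_nonneg D), Real.sqrt_sq hDnn, hv]
  set m : ℝ := (n:ℝ) - k with hm
  clear_value m
  have hkn : (k:ℝ) + 1 ≤ (n:ℝ) := by exact_mod_cast hk
  have hm1 : 1 ≤ m := by rw [hm]; linarith
  have hmn : m ≤ n := by
    rw [hm]
    have : (0:ℝ) ≤ k := Nat.cast_nonneg k
    linarith
  -- step 2 : u ≤ E * H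
  have hstep2 : u ≤ E * H := by
    have hmem : kappaDelta n k ca ∈ PsS n k := by
      rw [hca]; exact kappaDelta_constForm_mem_PsS n k a
    have hcd : codiff n k (kappaDelta n k ca) = (-m) • ca := by
      rw [hca, codiff_kappaDelta_const, hm]
    set T1 := finner n (k+1) (extd n k Δ) (kappaDelta n k ca) with hT1
    set T2 := finner n k Δ ((-m) • ca) with hT2
    set T3 := finner n (k+1) cb (kappaDelta n k ca) with hT3
    set T4 := finner n k (koszul n k cb) ca with hT4
    clear_value T1 T2 T3 T4
    have heq : Bf n k ρ (kappaDelta n k ca) = ((k:ℝ)+1) * T3 + m * (α + T4) := by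
      unfold Bf
      rw [hT3, hT4]
      rw [hdρ, finner_smul_left, hcd, finner_smul_right, hab, finner_add_left, ← hα]
      ring
    have hBeq := hB (kappaDelta n k ca) hmem
    rw [heq] at hBeq
    have hBf : Bf n k Δ (kappaDelta n k ca) = T1 - T2 := by
      unfold Bf
      rw [hT1, hT2, hcd]
    rw [hBf] at hBeq
    -- bounds on each term
    have habs1 : |T1| ≤ H * (D*u) := by
      rw [hT1]
      calc |finner n (k+1) (extd n k Δ) (kappaDelta n k ca)|
          ≤ Real.sqrt (finner n (k+1) (extd n k Δ) (extd n k Δ))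
            * Real.sqrt (finner n (k+1) (kappaDelta n k ca) (kappaDelta n k ca)) :=
            finner_abs_le n (k+1) _ _
        _ ≤ H * (D*u) :=
            mul_le_mul hHd hκδ (Real.sqrt_nonneg _) hHnn
    have habs2 : |T2| ≤ H * (m * u) := by
      rw [hT2, finner_smul_right, abs_mul, abs_neg, abs_of_nonneg (by linarith : (0:ℝ) ≤ m)]
      have h5 : |finner n k Δ ca| ≤ H * u := by
        calc |finner n k Δ ca|
            ≤ Real.sqrt (finner n k Δ Δ) * Real.sqrt (finner n k ca ca) :=
              finner_abs_le n k _ _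
          _ ≤ H * u := by
              rw [← hα, ← hu]
              exact mul_le_mul_of_nonneg_right hH0 hunn
      calc m * |finner n k Δ ca| ≤ m * (H * u) :=
            mul_le_mul_of_nonneg_left h5 (by linarith)
        _ = H * (m * u) := by ring
    have habs3 : |T3| ≤ v * (D * u) := by
      rw [hT3]
      calc |finner n (k+1) cb (kappaDelta n k ca)|
          ≤ Real.sqrt (finner n (k+1) cb cb)
            * Real.sqrt (finner n (k+1) (kappaDelta n k ca) (kappaDelta n k ca)) :=
            finner_abs_le n (k+1) _ _
        _ ≤ v * (D * u) := by
            rw [← hβ, ← hv]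
            exact mul_le_mul_of_nonneg_left hκδ hvnn
    have habs4 : |T4| ≤ (D*v) * u := by
      rw [hT4]
      calc |finner n k (koszul n k cb) ca|
          ≤ Real.sqrt (finner n k (koszul n k cb) (koszul n k cb))
            * Real.sqrt (finner n k ca ca) := finner_abs_le n k _ _
        _ ≤ (D*v) * u := by
            rw [← hα, ← hu]
            exact mul_le_mul_of_nonneg_right hκ hunn
    -- combine: m * α ≤ E * (H * u)
    have hcomb : m * α ≤ H*(D*u) + H*(m*u) + ((k:ℝ)+1) * (v*(D*u)) + m * ((D*v)*u) := by
      have e1 : m * α = (T1 - T2) - ((k:ℝ)+1) * T3 - m * T4 := by linarith [hBeq]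
      have t1 := le_trans (le_abs_self _) habs1
      have t3 : -(((k:ℝ)+1) * T3) ≤ ((k:ℝ)+1) * (v*(D*u)) := by
        have h8 : -T3 ≤ v*(D*u) := le_trans (neg_le_abs _) habs3
        have h9 := mul_le_mul_of_nonneg_left h8 (show (0:ℝ) ≤ (k:ℝ)+1 by positivity)
        linarith
      have t4 : -(m * T4) ≤ m * ((D*v)*u) := by
        have h8 : -T4 ≤ (D*v)*u := le_trans (neg_le_abs _) habs4
        have h9 := mul_le_mul_of_nonneg_left h8 (show (0:ℝ) ≤ m by linarith)
        linarith
      have t2' : -T2 ≤ H * (m*u) := le_trans (neg_le_abs _) habs2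
      calc m * α = T1 + (-T2) + (-(((k:ℝ)+1) * T3)) + (-(m * T4)) := by rw [e1]; ring
        _ ≤ H*(D*u) + H*(m*u) + ((k:ℝ)+1) * (v*(D*u)) + m * ((D*v)*u) :=
            add_le_add (add_le_add (add_le_add t1 t2') t3) t4
    have hfinal : m * α ≤ E * (H * u) := by
      have b1 : H*(m*u) ≤ H*((n:ℝ)*u) := by
        have h5 : m*u ≤ (n:ℝ)*u := mul_le_mul_of_nonneg_right hmn hunn
        exact mul_le_mul_of_nonneg_left h5 hHnn
      have b2 : ((k:ℝ)+1) * (v*(D*u)) ≤ (n:ℝ) * (H*(D*u)) := by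
        have h6 : v*(D*u) ≤ H*(D*u) :=
          mul_le_mul_of_nonneg_right hstep1 (mul_nonneg hDnn hunn)
        have h7 : (0:ℝ) ≤ H*(D*u) := mul_nonneg hHnn (mul_nonneg hDnn hunn)
        calc ((k:ℝ)+1) * (v*(D*u)) ≤ ((k:ℝ)+1) * (H*(D*u)) :=
              mul_le_mul_of_nonneg_left h6 (by positivity)
          _ ≤ (n:ℝ) * (H*(D*u)) := mul_le_mul_of_nonneg_right hkn h7
      have b3 : m * ((D*v)*u) ≤ (n:ℝ) * ((D*H)*u) := by
        have h6 : (D*v)*u ≤ (D*H)*u := by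
          have h66 : D*v ≤ D*H := mul_le_mul_of_nonneg_left hstep1 hDnn
          exact mul_le_mul_of_nonneg_right h66 hunn
        have h7 : (0:ℝ) ≤ (D*H)*u := mul_nonneg (mul_nonneg hDnn hHnn) hunn
        calc m * ((D*v)*u) ≤ m * ((D*H)*u) :=
              mul_le_mul_of_nonneg_left h6 (by linarith)
          _ ≤ (n:ℝ) * ((D*H)*u) := mul_le_mul_of_nonneg_right hmn h7
      calc m * α ≤ H*(D*u) + H*(m*u) + ((k:ℝ)+1) * (v*(D*u)) + m * ((D*v)*u) := hcomb
        _ ≤ H*(D*u) + H*((n:ℝ)*u) + (n:ℝ)*(H*(D*u)) + (n:ℝ)*((D*H)*u) :=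
            add_le_add (add_le_add (add_le_add le_rfl b1) b2) b3
        _ = E * (H * u) := by rw [hE]; ring
    -- conclude u ≤ E * H
    have hua : u^2 ≤ m * α := by
      have h8 : (1:ℝ) * α ≤ m * α := mul_le_mul_of_nonneg_right hm1 hαnn
      calc u^2 = α := hu2
        _ = 1 * α := (one_mul α).symm
        _ ≤ m * α := h8
    by_contra hc
    push_neg at hc
    have upos : 0 < u := lt_of_le_of_lt (mul_nonneg hEnn hHnn) hc
    have h9 : E*H*u < u*u := mul_lt_mul_of_pos_right hc upos
    have h10 : u^2 ≤ E*(H*u) := le_trans hua hfinal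
    have hlt : u*u < u*u := by
      calc u*u = u^2 := (sq u).symm
        _ ≤ E*(H*u) := h10
        _ = E*H*u := by ring
        _ < u*u := h9
    exact lt_irrefl _ hlt
  -- assemble the bound on hnorm ρ
  have hρκ : Real.sqrt (finner n k ρ ρ) ≤ u + D*H := by
    rw [hab]
    calc Real.sqrt (finner n k (ca + koszul n k cb) (ca + koszul n k cb))
        ≤ Real.sqrt (finner n k ca ca)
          + Real.sqrt (finner n k (koszul n k cb) (koszul n k cb)) :=
          finner_sqrt_triangle n k _ _
      _ ≤ u + D*H := by
          refine add_le_add ?_ ?_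
          · rw [← hα, ← hu]
          · exact le_trans hκ (mul_le_mul_of_nonneg_left hstep1 hDnn)
  have hdρ2 : finner n (k+1) (extd n k ρ) (extd n k ρ) = ((k:ℝ)+1)^2 * β := by
    rw [hdρ, finner_smul_left, finner_smul_right, ← hβ]
    ring
  have hnormρ : hnorm n k ρ ≤ C2 * H := by
    rw [hnorm_eq]
    have hG : Gf n k ρ ρ = finner n k ρ ρ + ((k:ℝ)+1)^2 * β := by
      unfold Gf
      rw [hdρ2]
    rw [hG]
    have h1 : finner n k ρ ρ ≤ (u + D*H)^2 := by
      have hsq := Real.sq_sqrt (finner_nonneg n k ρ)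
      have h0 := mul_self_le_mul_self (Real.sqrt_nonneg (finner n k ρ ρ)) hρκ
      calc finner n k ρ ρ = Real.sqrt (finner n k ρ ρ) ^ 2 := hsq.symm
        _ = Real.sqrt (finner n k ρ ρ) * Real.sqrt (finner n k ρ ρ) := sq _
        _ ≤ (u + D*H) * (u + D*H) := h0
        _ = (u + D*H)^2 := (sq _).symm
    have h2 : ((k:ℝ)+1)^2 * β ≤ (((n:ℝ)+1) * H)^2 := by
      have hbH : β ≤ H^2 := by
        rw [← hv2]
        calc v^2 = v*v := sq v
          _ ≤ H*H := mul_self_le_mul_self hvnn hstep1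
          _ = H^2 := (sq H).symm
      have hkk : ((k:ℝ)+1)^2 ≤ ((n:ℝ)+1)^2 := by
        have h5 : (k:ℝ)+1 ≤ (n:ℝ)+1 := by linarith
        calc ((k:ℝ)+1)^2 = ((k:ℝ)+1)*((k:ℝ)+1) := sq _
          _ ≤ ((n:ℝ)+1)*((n:ℝ)+1) := mul_self_le_mul_self (by positivity) h5
          _ = ((n:ℝ)+1)^2 := (sq _).symm
      calc ((k:ℝ)+1)^2 * β ≤ ((k:ℝ)+1)^2 * H^2 :=
            mul_le_mul_of_nonneg_left hbH (by positivity)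
        _ ≤ ((n:ℝ)+1)^2 * H^2 := mul_le_mul_of_nonneg_right hkk (sq_nonneg H)
        _ = (((n:ℝ)+1) * H)^2 := by ring
    have hnn1 : (0:ℝ) ≤ u + D*H := add_nonneg hunn (mul_nonneg hDnn hHnn)
    have hnn2 : (0:ℝ) ≤ ((n:ℝ)+1) * H := mul_nonneg (by positivity) hHnn
    calc Real.sqrt (finner n k ρ ρ + ((k:ℝ)+1)^2 * β)
        ≤ Real.sqrt (((u + D*H) + ((n:ℝ)+1) * H)^2) := by
          apply Real.sqrt_le_sqrt
          have hcross : (0:ℝ) ≤ 2*((u + D*H)*(((n:ℝ)+1)*H)) :=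
            mul_nonneg (by norm_num) (mul_nonneg hnn1 hnn2)
          calc finner n k ρ ρ + ((k:ℝ)+1)^2 * β
              ≤ (u + D*H)^2 + (((n:ℝ)+1)*H)^2 := add_le_add h1 h2
            _ ≤ (u + D*H)^2 + (((n:ℝ)+1)*H)^2 + 2*((u + D*H)*(((n:ℝ)+1)*H)) :=
                le_add_of_nonneg_right hcross
            _ = ((u + D*H) + ((n:ℝ)+1) * H)^2 := by ring
      _ = (u + D*H) + ((n:ℝ)+1) * H := Real.sqrt_sq (add_nonneg hnn1 hnn2)
      _ ≤ C2 * H := by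
          rw [hC2]
          calc (u + D*H) + ((n:ℝ)+1) * H
              ≤ (E*H + D*H) + ((n:ℝ)+1) * H :=
                add_le_add_left (add_le_add_left hstep2 _) _
            _ = (E + D + ((n:ℝ)+1)) * H := by ring
  -- conclusion
  have hfin : ω - I ω = Δ + (-ρ) := by
    rw [hΔ, hρ]
    abel
  rw [hfin]
  calc hnorm n k (Δ + (-ρ)) ≤ hnorm n k Δ + hnorm n k (-ρ) := hnorm_triangle n k _ _
    _ = H + hnorm n k ρ := by rw [hnorm_neg, hH]
    _ ≤ H + C2 * H := add_le_add_right hnormρ H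
    _ = (1 + C2) * H := by ring
end

section
/- The space Q_1^{*,-}Λ^{k+1} admits the decomposition Q_1^{*,-}Λ^{k+1} = N(δ_{k+1}, Q_1^{*,-}Λ^{k+1}) ⊕ κ^δ(R(δ_{k+1}, Q_1^{*,-}Λ^{k+1})), where κ^δ := ⋆ ∘ κ ∘ ⋆. -/
open MvPolynomial Finset MeasureTheory

namespace Stmt14Aux
open MvPolynomial Finset

variable {n : ℕ}

/-! ### Sign lemmas -/

lemma sgn_erase_of_lt {t : Finset (Fin n)} {i j : Fin n} (hi : i ∈ t) (hij : i < j) :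
    sgn (t.erase i) j = -sgn t j := by
  unfold sgn
  have hmem : i ∈ t.filter (· < j) := Finset.mem_filter.2 ⟨hi, hij⟩
  rw [Finset.filter_erase, ← Finset.card_erase_add_one hmem, pow_succ]
  ring

lemma sgn_erase_of_not_lt {t : Finset (Fin n)} {i j : Fin n} (h : ¬ i < j) :
    sgn (t.erase i) j = sgn t j := by
  unfold sgn
  rw [Finset.filter_erase, Finset.erase_eq_of_notMem
    (fun hc => h (Finset.mem_filter.1 hc).2 : i ∉ t.filter (· < j))]

lemma sgn_insert_of_lt {t : Finset (Fin n)} {i j : Fin n} (hi : i ∉ t) (hij : i < j) :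
    sgn (insert i t) j = -sgn t j := by
  unfold sgn
  rw [Finset.filter_insert, if_pos hij,
    Finset.card_insert_of_notMem (fun h => hi (Finset.mem_filter.1 h).1), pow_succ]
  ring

lemma sgn_insert_of_not_lt {t : Finset (Fin n)} {i j : Fin n} (h : ¬ i < j) :
    sgn (insert i t) j = sgn t j := by
  unfold sgn
  rw [Finset.filter_insert, if_neg h]

lemma sgn_mul_self (t : Finset (Fin n)) (i : Fin n) : sgn t i * sgn t i = 1 := by
  unfold sgn
  rw [← pow_add]
  exact Even.neg_one_pow ⟨_, rfl⟩

/-- Cross sign cancellation: erase vs insert. -/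
lemma sgn_cross {t : Finset (Fin n)} {i j : Fin n} (hi : i ∈ t) (hj : j ∉ t) :
    sgn t i * sgn (t.erase i) j + sgn t j * sgn (insert j t) i = 0 := by
  have hij : i ≠ j := fun h => hj (h ▸ hi)
  rcases hij.lt_or_gt with h | h
  · rw [sgn_erase_of_lt hi h, sgn_insert_of_not_lt (by omega)]
    ring
  · rw [sgn_erase_of_not_lt (by omega), sgn_insert_of_lt hj h]
    ring

/-- Antisymmetric sign cancellation: double insert. -/
lemma sgn_anti_insert {t : Finset (Fin n)} {i j : Fin n} (hi : i ∉ t) (hj : j ∉ t)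
    (hij : i ≠ j) :
    sgn t i * sgn (insert i t) j + sgn t j * sgn (insert j t) i = 0 := by
  rcases hij.lt_or_gt with h | h
  · rw [sgn_insert_of_lt hi h, sgn_insert_of_not_lt (by omega)]
    ring
  · rw [sgn_insert_of_not_lt (by omega), sgn_insert_of_lt hj h]
    ring

/-- Antisymmetric sign cancellation: double erase. -/
lemma sgn_anti_erase {t : Finset (Fin n)} {i j : Fin n} (hi : i ∈ t) (hj : j ∈ t)
    (hij : i ≠ j) :
    sgn t i * sgn (t.erase i) j + sgn t j * sgn (t.erase j) i = 0 := by
  rcases hij.lt_or_gt with h | h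
  · rw [sgn_erase_of_lt hi h, sgn_erase_of_not_lt (by omega)]
    ring
  · rw [sgn_erase_of_not_lt (by omega), sgn_erase_of_lt hj h]
    ring

end Stmt14Aux
namespace Stmt14Aux
open MvPolynomial Finset

variable {n : ℕ}

/-! ### Extension of forms to all finsets -/

noncomputable def extF (n k : ℕ) (ω : Form n k) (t : Finset (Fin n)) :
    MvPolynomial (Fin n) ℝ :=
  if h : t.card = k then ω ⟨t, h⟩ else 0

lemma extF_self {k : ℕ} (ω : Form n k) (s : Idx n k) : extF n k ω s.1 = ω s := by
  rw [extF, dif_pos s.2]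

lemma extF_insert {k : ℕ} (ω : Form n (k+1)) (s : Idx n k) {j : Fin n} (hj : j ∉ s.1) :
    extF n (k+1) ω (insert j s.1) = ω (insertIdx s hj) := by
  rw [extF, dif_pos (by rw [Finset.card_insert_of_notMem hj, s.2])]
  rfl

lemma extF_erase {k : ℕ} (ω : Form n k) (s : Idx n (k+1)) {i : Fin n} (hi : i ∈ s.1) :
    extF n k ω (s.1.erase i) = ω (eraseIdx s hi) := by
  rw [extF, dif_pos (by rw [Finset.card_erase_of_mem hi, s.2]; omega)]
  rfl

lemma codiff_apply {k : ℕ} (ω : Form n (k+1)) (s : Idx n k) :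
    codiff n k ω s = -∑ j ∈ s.1ᶜ, sgn s.1 j • pderiv j (extF n (k+1) ω (insert j s.1)) := by
  show -∑ j ∈ (s.1ᶜ).attach,
      sgn s.1 j.1 • pderiv j.1 (ω (insertIdx s (Finset.mem_compl.mp j.2))) = _
  congr 1
  rw [← Finset.sum_attach (s.1ᶜ)
    (fun j => sgn s.1 j • pderiv j (extF n (k+1) ω (insert j s.1)))]
  refine Finset.sum_congr rfl fun j _ => ?_
  rw [extF_insert ω s (Finset.mem_compl.mp j.2)]

lemma kappa_apply {k : ℕ} (ω : Form n k) (s : Idx n (k+1)) :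
    kappaDelta n k ω s = ∑ i ∈ s.1, sgn s.1 i • (X i * extF n k ω (s.1.erase i)) := by
  show ∑ i ∈ s.1.attach, sgn s.1 i.1 • (X i.1 * ω (eraseIdx s i.2)) = _
  rw [← Finset.sum_attach s.1 (fun i => sgn s.1 i • (X i * extF n k ω (s.1.erase i)))]
  refine Finset.sum_congr rfl fun i _ => ?_
  rw [extF_erase ω s i.2]

/-! ### pderiv commutes -/

lemma single_sub_apply_ne {u : Fin n →₀ ℕ} {i j : Fin n} (hij : i ≠ j) :
    ((u - Finsupp.single j 1 : Fin n →₀ ℕ)) i = u i := by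
  rw [Finsupp.tsub_apply, Finsupp.single_apply, if_neg (fun h : j = i => hij h.symm),
    Nat.sub_zero]

lemma pderiv_pderiv (i j : Fin n) (p : MvPolynomial (Fin n) ℝ) :
    pderiv i (pderiv j p) = pderiv j (pderiv i p) := by
  rcases eq_or_ne i j with rfl | hij
  · rfl
  · induction p using MvPolynomial.induction_on' with
    | monomial u a =>
      simp only [pderiv_monomial]
      rw [single_sub_apply_ne hij, single_sub_apply_ne hij.symm, tsub_tsub, tsub_tsub,
        add_comm (Finsupp.single j 1)]
      congr 1
      ring
    | add p q hp hq => simp [hp, hq]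

end Stmt14Aux
namespace Stmt14Aux
open MvPolynomial Finset

variable {n : ℕ}

/-! ### Monomial bookkeeping -/

noncomputable def D (τ : Finset (Fin n)) : Fin n →₀ ℕ := ∑ j ∈ τ, Finsupp.single j 1

lemma D_apply (τ : Finset (Fin n)) (i : Fin n) : D τ i = if i ∈ τ then 1 else 0 := by
  classical
  rw [D, Finsupp.finset_sum_apply]
  simp [Finsupp.single_apply]

lemma D_insert {τ : Finset (Fin n)} {a : Fin n} (ha : a ∉ τ) :
    D (insert a τ) = Finsupp.single a 1 + D τ := by
  rw [D, D, Finset.sum_insert ha]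

lemma D_erase {τ : Finset (Fin n)} {a : Fin n} (ha : a ∈ τ) :
    D τ - Finsupp.single a 1 = D (τ.erase a) := by
  have : D τ = Finsupp.single a 1 + D (τ.erase a) := by
    rw [← D_insert (Finset.notMem_erase a τ), Finset.insert_erase ha]
  rw [this, add_tsub_cancel_left]

lemma prod_X_eq (τ : Finset (Fin n)) :
    (∏ i ∈ τ, (X i : MvPolynomial (Fin n) ℝ)) = monomial (D τ) 1 := by
  classical
  induction τ using Finset.induction with
  | empty => simp [D, monomial_zero']
  | @insert a s h ih =>
    rw [Finset.prod_insert h, ih, D_insert h, X, monomial_mul, one_mul]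

lemma monForm_apply {k : ℕ} (τ : Finset (Fin n)) (σ s : Idx n k) :
    monForm n k τ σ s = if s.1 = σ.1 then monomial (D τ) (1:ℝ) else 0 := by
  rw [monForm, prod_X_eq, if_congr (Iff.symm Subtype.ext_iff) rfl rfl]

lemma extF_monForm {k : ℕ} (τ : Finset (Fin n)) (σ : Idx n k) (u : Finset (Fin n)) :
    extF n k (monForm n k τ σ) u = if u = σ.1 then monomial (D τ) (1:ℝ) else 0 := by
  rw [extF]
  split
  · next h => rw [monForm_apply]
  · next h => rw [if_neg (fun hu => h (by rw [hu]; exact σ.2))]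

/-! ### Euler operator facts -/

lemma coeff_X_mul_pderiv (p : MvPolynomial (Fin n) ℝ) (i : Fin n) (m : Fin n →₀ ℕ) :
    coeff m (X i * pderiv i p) = (m i : ℝ) * coeff m p := by
  induction p using MvPolynomial.induction_on' with
  | add p q hp hq => rw [map_add, mul_add, coeff_add, hp, hq, coeff_add, mul_add]
  | monomial u a =>
    by_cases hui : u i = 0
    · have hz : pderiv i (monomial u a) = 0 := by
        rw [pderiv_monomial, hui]
        simp
      rw [hz, mul_zero, coeff_zero, coeff_monomial]
      split
      · next h => rw [← h, hui]; simp
      · rw [mul_zero]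
    · have hle : Finsupp.single i 1 ≤ u := by
        rw [Finsupp.single_le_iff]
        omega
      rw [pderiv_monomial, coeff_X_mul']
      by_cases him : i ∈ m.support
      · have hlem : Finsupp.single i 1 ≤ m := by
          rw [Finsupp.single_le_iff]
          have := Finsupp.mem_support_iff.1 him
          omega
        rw [if_pos him, coeff_monomial, coeff_monomial]
        have hcond : (u - Finsupp.single i 1 = m - Finsupp.single i 1) ↔ (u = m) := by
          constructor
          · intro h
            calc u = u - Finsupp.single i 1 + Finsupp.single i 1 :=
                  (tsub_add_cancel_of_le hle).symm
              _ = m - Finsupp.single i 1 + Finsupp.single i 1 := by rw [h]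
              _ = m := tsub_add_cancel_of_le hlem
          · intro h; rw [h]
        rw [if_congr hcond rfl rfl]
        split
        · next h => rw [h]; ring
        · rw [mul_zero]
      · rw [if_neg him, Finsupp.notMem_support_iff.1 him]
        simp

lemma coeff_euler (p : MvPolynomial (Fin n) ℝ) (m : Fin n →₀ ℕ) :
    coeff m (∑ i : Fin n, X i * pderiv i p) = ((∑ i : Fin n, m i : ℕ) : ℝ) * coeff m p := by
  rw [coeff_sum]
  rw [Finset.sum_congr rfl (fun i _ => coeff_X_mul_pderiv p i m), ← Finset.sum_mul]
  norm_cast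

lemma sum_D (τ : Finset (Fin n)) : ∑ i : Fin n, D τ i = τ.card := by
  classical
  simp only [D_apply, Finset.sum_ite_mem, Finset.univ_inter, Finset.sum_const, smul_eq_mul,
    mul_one]

lemma euler_monomial (τ : Finset (Fin n)) :
    (∑ i : Fin n, X i * pderiv i (monomial (D τ) (1:ℝ))) = (τ.card : ℝ) • monomial (D τ) 1 := by
  apply MvPolynomial.ext
  intro m
  rw [coeff_euler, coeff_smul, coeff_monomial]
  split
  · next h => rw [← h, sum_D]; simp
  · simp

lemma pos_sum_of_ne_zero {m : Fin n →₀ ℕ} (hm : m ≠ 0) : 1 ≤ ∑ i : Fin n, m i := by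
  obtain ⟨i, hi⟩ := Finsupp.ne_iff.1 hm
  have : 1 ≤ m i := by
    simp only [Finsupp.coe_zero, Pi.zero_apply] at hi
    omega
  calc 1 ≤ m i := this
    _ ≤ _ := Finset.single_le_sum (fun _ _ => Nat.zero_le _) (Finset.mem_univ i)

end Stmt14Aux
namespace Stmt14Aux
open MvPolynomial Finset

variable {n : ℕ}

lemma homotopy {k : ℕ} (ω : Form n (k+1)) (s : Idx n (k+1)) :
    kappaDelta n k (codiff n k ω) s + codiff n (k+1) (kappaDelta n (k+1) ω) s
      = -(∑ i : Fin n, X i * pderiv i (ω s)) - ((n - (k+1) : ℕ) : ℝ) • ω s := by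
  classical
  set t := s.1 with ht
  set P : Fin n → Fin n → MvPolynomial (Fin n) ℝ :=
    fun i j => X i * pderiv j (extF n (k+1) ω (insert j (t.erase i))) with hP
  have hF : extF n (k+1) ω t = ω s := extF_self ω s
  rw [kappa_apply, codiff_apply]
  have h1 : ∀ i ∈ t, extF n k (codiff n k ω) (t.erase i)
      = -∑ j ∈ insert i tᶜ, sgn (t.erase i) j •
          pderiv j (extF n (k+1) ω (insert j (t.erase i))) := by
    intro i hi
    rw [extF_erase (codiff n k ω) s hi, codiff_apply]
    have h : (eraseIdx s hi).1 = t.erase i := rfl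
    rw [show ((eraseIdx s hi).1)ᶜ = insert i tᶜ by rw [h, Finset.compl_erase]]
    congr 1
  have h2 : ∀ j ∈ tᶜ, extF n (k+1+1) (kappaDelta n (k+1) ω) (insert j t)
      = ∑ i ∈ insert j t, sgn (insert j t) i •
          (X i * extF n (k+1) ω ((insert j t).erase i)) := by
    intro j hj
    rw [extF_insert (kappaDelta n (k+1) ω) s (Finset.mem_compl.mp hj), kappa_apply]
    rfl
  have hterm1 : ∀ i ∈ t, sgn t i • (X i * extF n k (codiff n k ω) (t.erase i))
      = -(X i * pderiv i (ω s))
        + -∑ j ∈ tᶜ, (sgn t i * sgn (t.erase i) j) • P i j := by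
    intro i hi
    rw [h1 i hi, Finset.sum_insert (fun hc => (Finset.mem_compl.1 hc) hi)]
    rw [show insert i (t.erase i) = t from Finset.insert_erase hi, hF,
      sgn_erase_of_not_lt (lt_irrefl i)]
    rw [mul_neg, smul_neg, mul_add, smul_add, neg_add]
    congr 1
    · rw [mul_smul_comm, smul_smul, sgn_mul_self, one_smul]
    · rw [Finset.mul_sum, Finset.smul_sum]
      congr 1
      refine Finset.sum_congr rfl fun j _ => ?_
      rw [mul_smul_comm, smul_smul]
  have hterm2 : ∀ j ∈ tᶜ,
      sgn t j • pderiv j (extF n (k+1+1) (kappaDelta n (k+1) ω) (insert j t))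
      = (ω s + X j * pderiv j (ω s))
        + ∑ i ∈ t, (sgn t j * sgn (insert j t) i) • P i j := by
    intro j hj
    have hjt : j ∉ t := Finset.mem_compl.1 hj
    rw [h2 j hj, Finset.sum_insert hjt]
    rw [Finset.erase_insert hjt, hF, sgn_insert_of_not_lt (lt_irrefl j)]
    rw [map_add, Derivation.map_smul, pderiv_mul, pderiv_X_self, one_mul]
    rw [smul_add, smul_smul, sgn_mul_self, one_smul]
    congr 1
    rw [map_sum, Finset.smul_sum]
    refine Finset.sum_congr rfl fun i hi => ?_
    have hij : i ≠ j := fun h => hjt (h ▸ hi)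
    rw [Finset.erase_insert_of_ne hij.symm, Derivation.map_smul, pderiv_mul,
      pderiv_X_of_ne hij, zero_mul, zero_add, smul_smul]
  rw [Finset.sum_congr rfl hterm1, Finset.sum_congr rfl hterm2]
  rw [Finset.sum_add_distrib, Finset.sum_add_distrib, Finset.sum_add_distrib]
  have hcross : (∑ i ∈ t, ∑ j ∈ tᶜ, (sgn t i * sgn (t.erase i) j) • P i j)
      + (∑ j ∈ tᶜ, ∑ i ∈ t, (sgn t j * sgn (insert j t) i) • P i j) = 0 := by
    have hswap : (∑ j ∈ tᶜ, ∑ i ∈ t, (sgn t j * sgn (insert j t) i) • P i j)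
        = ∑ i ∈ t, ∑ j ∈ tᶜ, (sgn t j * sgn (insert j t) i) • P i j := Finset.sum_comm
    rw [hswap, ← Finset.sum_add_distrib]
    refine Finset.sum_eq_zero fun i hi => ?_
    rw [← Finset.sum_add_distrib]
    refine Finset.sum_eq_zero fun j hj => ?_
    rw [← add_smul, sgn_cross hi (Finset.mem_compl.1 hj), zero_smul]
  have hsplit : (∑ i ∈ t, X i * pderiv i (ω s)) + (∑ i ∈ tᶜ, X i * pderiv i (ω s))
      = ∑ i : Fin n, X i * pderiv i (ω s) := Finset.sum_add_sum_compl t _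
  have hcount : (∑ _j ∈ tᶜ, ω s) = ((n - (k+1) : ℕ) : ℝ) • ω s := by
    rw [Finset.sum_const, Nat.cast_smul_eq_nsmul, Finset.card_compl, Fintype.card_fin, s.2]
  rw [Finset.sum_neg_distrib, Finset.sum_neg_distrib]
  rw [← hsplit, ← hcount]
  rw [eq_neg_of_add_eq_zero_left hcross]
  abel

end Stmt14Aux
namespace Stmt14Aux
open MvPolynomial Finset

variable {n : ℕ}

lemma sum_eq_zero_of_anti {t : Finset (Fin n)} {f : Fin n → Fin n → MvPolynomial (Fin n) ℝ}
    (hanti : ∀ i ∈ t, ∀ j ∈ t.erase i, f i j = -f j i) :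
    ∑ i ∈ t, ∑ j ∈ t.erase i, f i j = 0 := by
  classical
  set S := ∑ i ∈ t, ∑ j ∈ t.erase i, f i j with hS
  have hswap : S = ∑ j ∈ t, ∑ i ∈ t.erase j, f i j := by
    rw [hS]
    exact Finset.sum_comm' (by
      intro x y
      simp only [Finset.mem_erase]
      tauto)
  have hneg : S = -S := by
    nth_rewrite 1 [hswap]
    rw [← Finset.sum_neg_distrib]
    refine Finset.sum_congr rfl fun j hj => ?_
    rw [← Finset.sum_neg_distrib]
    refine Finset.sum_congr rfl fun i hi => ?_
    have hit : i ∈ t := Finset.mem_of_mem_erase hi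
    have hjt : j ∈ t.erase i :=
      Finset.mem_erase.2 ⟨fun h => (Finset.mem_erase.1 hi).1 h.symm, hj⟩
    rw [hanti i hit j hjt]
  have h2 : (2:ℝ) • S = 0 := by
    rw [two_smul]
    nth_rewrite 1 [hneg]
    rw [neg_add_cancel]
  calc S = (2:ℝ)⁻¹ • ((2:ℝ) • S) := by rw [smul_smul]; norm_num
    _ = 0 := by rw [h2, smul_zero]

lemma codiff_codiff {k : ℕ} (ω : Form n (k+2)) :
    codiff n k (codiff n (k+1) ω) = 0 := by
  classical
  funext s
  set t := s.1 with ht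
  rw [codiff_apply, Pi.zero_apply]
  have h : ∀ j ∈ tᶜ, extF n (k+1) (codiff n (k+1) ω) (insert j t)
      = -∑ l ∈ tᶜ.erase j, sgn (insert j t) l •
          pderiv l (extF n (k+2) ω (insert l (insert j t))) := by
    intro j hj
    rw [extF_insert (codiff n (k+1) ω) s (Finset.mem_compl.mp hj), codiff_apply]
    have hv : (insertIdx s (Finset.mem_compl.mp hj)).1 = insert j t := rfl
    rw [show ((insertIdx s (Finset.mem_compl.mp hj)).1)ᶜ = tᶜ.erase j by
      rw [hv, Finset.compl_insert]]
    rfl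
  have key : ∀ j ∈ tᶜ, sgn t j • pderiv j (extF n (k+1) (codiff n (k+1) ω) (insert j t))
      = -∑ l ∈ tᶜ.erase j, (sgn t j * sgn (insert j t) l) •
          pderiv j (pderiv l (extF n (k+2) ω (insert l (insert j t)))) := by
    intro j hj
    rw [h j hj, map_neg, map_sum, smul_neg, Finset.smul_sum]
    congr 1
    refine Finset.sum_congr rfl fun l _ => ?_
    rw [Derivation.map_smul, smul_smul]
  rw [Finset.sum_congr rfl key, Finset.sum_neg_distrib, neg_neg]
  refine sum_eq_zero_of_anti fun j hj l hl => ?_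
  have hlt : l ∈ tᶜ := Finset.mem_of_mem_erase hl
  have hlj : l ≠ j := (Finset.mem_erase.1 hl).1
  have hsgn : sgn t j * sgn (insert j t) l = -(sgn t l * sgn (insert l t) j) :=
    eq_neg_of_add_eq_zero_left
      (sgn_anti_insert (Finset.mem_compl.1 hj) (Finset.mem_compl.1 hlt) hlj.symm)
  rw [hsgn, neg_smul, pderiv_pderiv, Finset.insert_comm]
end Stmt14Aux
namespace Stmt14Aux
open MvPolynomial Finset

variable {n : ℕ}

lemma kappa_kappa {k : ℕ} (η : Form n k) :
    kappaDelta n (k+1) (kappaDelta n k η) = 0 := by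
  classical
  funext s
  set t := s.1 with ht
  rw [kappa_apply, Pi.zero_apply]
  have h : ∀ i ∈ t, extF n (k+1) (kappaDelta n k η) (t.erase i)
      = ∑ l ∈ t.erase i, sgn (t.erase i) l • (X l * extF n k η ((t.erase i).erase l)) := by
    intro i hi
    rw [extF_erase (kappaDelta n k η) s hi, kappa_apply]
    rfl
  have key : ∀ i ∈ t, sgn t i • (X i * extF n (k+1) (kappaDelta n k η) (t.erase i))
      = ∑ l ∈ t.erase i, (sgn t i * sgn (t.erase i) l) •
          (X i * (X l * extF n k η ((t.erase i).erase l))) := by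
    intro i hi
    rw [h i hi, Finset.mul_sum, Finset.smul_sum]
    refine Finset.sum_congr rfl fun l _ => ?_
    rw [mul_smul_comm, smul_smul]
  rw [Finset.sum_congr rfl key]
  refine sum_eq_zero_of_anti fun i hi l hl => ?_
  have hlt : l ∈ t := Finset.mem_of_mem_erase hl
  have hli : l ≠ i := (Finset.mem_erase.1 hl).1
  have hsgn : sgn t i * sgn (t.erase i) l = -(sgn t l * sgn (t.erase l) i) :=
    eq_neg_of_add_eq_zero_left (sgn_anti_erase hi hlt hli.symm)
  rw [hsgn, neg_smul, mul_left_comm, Finset.erase_right_comm]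

/-! ### Action of the operators on the monomial generators -/

lemma codiff_monForm {k : ℕ} (τ : Finset (Fin n)) (σ : Idx n (k+1)) (hτσ : τ ⊆ σ.1) :
    codiff n k (monForm n (k+1) τ σ)
      = ∑ i ∈ τ.attach, (-(sgn (σ.1.erase i.1) i.1)) •
          monForm n k (τ.erase i.1) (eraseIdx σ (hτσ i.2)) := by
  classical
  funext s
  rw [codiff_apply]
  rw [Finset.sum_congr rfl (fun j (_ : j ∈ s.1ᶜ) => by
    rw [extF_monForm (k := k+1) τ σ (insert j s.1)] :
    ∀ j ∈ s.1ᶜ, sgn s.1 j • pderiv j (extF n (k+1) (monForm n (k+1) τ σ) (insert j s.1))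
      = sgn s.1 j • pderiv j (if insert j s.1 = σ.1 then monomial (D τ) (1:ℝ) else 0))]
  have hR : (∑ i ∈ τ.attach, (-(sgn (σ.1.erase i.1) i.1)) •
        monForm n k (τ.erase i.1) (eraseIdx σ (hτσ i.2))) s
      = ∑ i ∈ τ, (-(sgn (σ.1.erase i) i)) •
          (if s.1 = σ.1.erase i then monomial (D (τ.erase i)) (1:ℝ) else 0) := by
    rw [Finset.sum_apply]
    rw [← Finset.sum_attach τ (fun i => (-(sgn (σ.1.erase i) i)) •
      (if s.1 = σ.1.erase i then monomial (D (τ.erase i)) (1:ℝ) else 0))]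
    refine Finset.sum_congr rfl fun i _ => ?_
    rw [Pi.smul_apply, monForm_apply]
    rfl
  rw [hR]
  by_cases hsub : s.1 ⊆ σ.1
  · have hcard : (σ.1 \ s.1).card = 1 := by
      rw [Finset.card_sdiff_of_subset hsub, σ.2, s.2]
      omega
    obtain ⟨a, ha⟩ := Finset.card_eq_one.1 hcard
    have hamem : a ∈ σ.1 ∧ a ∉ s.1 :=
      Finset.mem_sdiff.1 (ha ▸ Finset.mem_singleton_self a)
    have hins : insert a s.1 = σ.1 := by
      apply Finset.Subset.antisymm (Finset.insert_subset hamem.1 hsub)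
      intro x hx
      by_cases hxs : x ∈ s.1
      · exact Finset.mem_insert_of_mem hxs
      · have : x ∈ σ.1 \ s.1 := Finset.mem_sdiff.2 ⟨hx, hxs⟩
        rw [ha, Finset.mem_singleton] at this
        rw [this]
        exact Finset.mem_insert_self a s.1
    have hserase : s.1 = σ.1.erase a := by
      rw [← hins, Finset.erase_insert hamem.2]
    have huniq : ∀ j, j ∉ s.1 → insert j s.1 = σ.1 → j = a := by
      intro j hjs hj
      have : j ∈ σ.1 \ s.1 := Finset.mem_sdiff.2 ⟨hj ▸ Finset.mem_insert_self j s.1, hjs⟩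
      rwa [ha, Finset.mem_singleton] at this
    have herase_inj : ∀ i, i ∈ σ.1 → s.1 = σ.1.erase i → i = a := by
      intro i hiσ hc
      by_contra hia
      have h2 : i ∈ σ.1.erase a := Finset.mem_erase.2 ⟨hia, hiσ⟩
      rw [← hserase, hc] at h2
      exact Finset.notMem_erase i σ.1 h2
    rw [Finset.sum_eq_single_of_mem a (Finset.mem_compl.2 hamem.2) (fun j hjc hja => by
      rw [if_neg (fun hc => hja (huniq j (Finset.mem_compl.1 hjc) hc)), map_zero, smul_zero])]
    rw [if_pos hins]
    by_cases haτ : a ∈ τ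
    · rw [Finset.sum_eq_single_of_mem a haτ (fun i hiτ hia => by
        rw [if_neg (fun hc => hia (herase_inj i (hτσ hiτ) hc)), smul_zero])]
      rw [if_pos hserase, pderiv_monomial, D_erase haτ,
        show D τ a = 1 by rw [D_apply, if_pos haτ], Nat.cast_one, mul_one, hserase, neg_smul]
    · have hz : pderiv a (monomial (D τ) (1:ℝ)) = 0 := by
        rw [pderiv_monomial, show D τ a = 0 by rw [D_apply, if_neg haτ]]
        simp
      rw [hz, smul_zero, neg_zero]
      exact (Finset.sum_eq_zero (fun i hiτ => by
        rw [if_neg (fun hc => haτ ((herase_inj i (hτσ hiτ) hc) ▸ hiτ)), smul_zero])).symm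
  · rw [Finset.sum_eq_zero (fun j _ => by
      rw [if_neg (fun hc => hsub (by rw [← hc]; exact Finset.subset_insert j s.1)), map_zero, smul_zero]),
      neg_zero]
    exact (Finset.sum_eq_zero (fun i _ => by
      rw [if_neg (fun hc => hsub (by rw [hc]; exact Finset.erase_subset i σ.1)), smul_zero])).symm

end Stmt14Aux
namespace Stmt14Aux
open MvPolynomial Finset

variable {n : ℕ}

lemma kappa_monForm {k : ℕ} (τ : Finset (Fin n)) (σ : Idx n k) (hτσ : τ ⊆ σ.1) :
    kappaDelta n k (monForm n k τ σ)
      = ∑ j ∈ (σ.1ᶜ).attach, sgn (insert j.1 σ.1) j.1 •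
          monForm n (k+1) (insert j.1 τ) (insertIdx σ (Finset.mem_compl.mp j.2)) := by
  classical
  funext s
  rw [kappa_apply]
  rw [Finset.sum_congr rfl (fun i (_ : i ∈ s.1) => by
    rw [extF_monForm (k := k) τ σ (s.1.erase i)] :
    ∀ i ∈ s.1, sgn s.1 i • (X i * extF n k (monForm n k τ σ) (s.1.erase i))
      = sgn s.1 i • (X i * if s.1.erase i = σ.1 then monomial (D τ) (1:ℝ) else 0))]
  have hR : (∑ j ∈ (σ.1ᶜ).attach, sgn (insert j.1 σ.1) j.1 •
        monForm n (k+1) (insert j.1 τ) (insertIdx σ (Finset.mem_compl.mp j.2))) s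
      = ∑ j ∈ σ.1ᶜ, sgn (insert j σ.1) j •
          (if s.1 = insert j σ.1 then monomial (D (insert j τ)) (1:ℝ) else 0) := by
    rw [Finset.sum_apply]
    rw [← Finset.sum_attach (σ.1ᶜ) (fun j => sgn (insert j σ.1) j •
      (if s.1 = insert j σ.1 then monomial (D (insert j τ)) (1:ℝ) else 0))]
    refine Finset.sum_congr rfl fun j _ => ?_
    rw [Pi.smul_apply, monForm_apply]
    rfl
  rw [hR]
  by_cases hsub : σ.1 ⊆ s.1
  · have hcard : (s.1 \ σ.1).card = 1 := by
      rw [Finset.card_sdiff_of_subset hsub, σ.2, s.2]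
      omega
    obtain ⟨a, ha⟩ := Finset.card_eq_one.1 hcard
    have hamem : a ∈ s.1 ∧ a ∉ σ.1 :=
      Finset.mem_sdiff.1 (ha ▸ Finset.mem_singleton_self a)
    have hins : insert a σ.1 = s.1 := by
      apply Finset.Subset.antisymm (Finset.insert_subset hamem.1 hsub)
      intro x hx
      by_cases hxσ : x ∈ σ.1
      · exact Finset.mem_insert_of_mem hxσ
      · have : x ∈ s.1 \ σ.1 := Finset.mem_sdiff.2 ⟨hx, hxσ⟩
        rw [ha, Finset.mem_singleton] at this
        rw [this]
        exact Finset.mem_insert_self a σ.1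
    have hserase : σ.1 = s.1.erase a := by
      rw [← hins, Finset.erase_insert hamem.2]
    have huniq1 : ∀ i, i ∈ s.1 → s.1.erase i = σ.1 → i = a := by
      intro i hi hc
      have hiσ : i ∉ σ.1 := fun hiσ => by
        rw [← hc] at hiσ
        exact Finset.notMem_erase i s.1 hiσ
      have : i ∈ s.1 \ σ.1 := Finset.mem_sdiff.2 ⟨hi, hiσ⟩
      rwa [ha, Finset.mem_singleton] at this
    have huniq2 : ∀ j, j ∉ σ.1 → s.1 = insert j σ.1 → j = a := by
      intro j hjσ hc
      have : j ∈ s.1 \ σ.1 := Finset.mem_sdiff.2 ⟨by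
        rw [hc]; exact Finset.mem_insert_self j σ.1, hjσ⟩
      rwa [ha, Finset.mem_singleton] at this
    rw [Finset.sum_eq_single_of_mem a hamem.1 (fun i hi hia => by
      rw [if_neg (fun hc => hia (huniq1 i hi hc)), mul_zero, smul_zero])]
    rw [if_pos hserase.symm]
    rw [Finset.sum_eq_single_of_mem a (Finset.mem_compl.2 hamem.2) (fun j hjc hja => by
      rw [if_neg (fun hc => hja (huniq2 j (Finset.mem_compl.1 hjc) hc)), smul_zero])]
    rw [if_pos hins.symm, hins]
    have haτ : a ∉ τ := fun h => hamem.2 (hτσ h)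
    rw [D_insert haτ, X, monomial_mul, one_mul]
  · rw [Finset.sum_eq_zero (fun i _ => by
      rw [if_neg (fun hc => hsub (by rw [← hc]; exact Finset.erase_subset i s.1)),
        mul_zero, smul_zero])]
    exact (Finset.sum_eq_zero (fun j _ => by
      rw [if_neg (fun hc => hsub (by rw [hc]; exact Finset.subset_insert j σ.1)), smul_zero])).symm

end Stmt14Aux
namespace Stmt14Aux
open MvPolynomial Finset

variable {n : ℕ}

lemma map_codiff_Qs {k : ℕ} : Submodule.map (codiff n k) (Qs n (k+1)) ≤ Qs n k := by
  rw [Qs, Submodule.map_span, Submodule.span_le]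
  rintro x ⟨ω, ⟨τ, σ, hcard, hsub, rfl⟩, rfl⟩
  rw [SetLike.mem_coe, codiff_monForm τ σ hsub]
  apply Submodule.sum_mem
  rintro ⟨i, hi⟩ -
  apply Submodule.smul_mem
  refine Submodule.subset_span ⟨τ.erase i, eraseIdx σ (hsub hi), ?_, ?_, rfl⟩
  · rw [Finset.card_erase_of_mem hi]
    omega
  · exact Finset.erase_subset_erase i hsub

lemma map_kappa_Qs {k : ℕ} : Submodule.map (kappaDelta n k) (Qs n k) ≤ Qs n (k+1) := by
  rw [Qs, Submodule.map_span, Submodule.span_le]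
  rintro x ⟨ω, ⟨τ, σ, hcard, hsub, rfl⟩, rfl⟩
  rw [SetLike.mem_coe, kappa_monForm τ σ hsub]
  apply Submodule.sum_mem
  rintro ⟨j, hj⟩ -
  apply Submodule.smul_mem
  have hjτ : j ∉ τ := fun h => (Finset.mem_compl.1 hj) (hsub h)
  refine Submodule.subset_span ⟨insert j τ, insertIdx σ (Finset.mem_compl.mp hj), ?_, ?_, rfl⟩
  · rw [Finset.card_insert_of_notMem hjτ]
    omega
  · exact Finset.insert_subset_insert j hsub

lemma homotopy_mon {k : ℕ} (τ : Finset (Fin n)) (σ : Idx n (k+1)) (hτσ : τ ⊆ σ.1) :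
    kappaDelta n k (codiff n k (monForm n (k+1) τ σ))
      + codiff n (k+1) (kappaDelta n (k+1) (monForm n (k+1) τ σ))
      = (-((τ.card + (n - (k+1)) : ℕ) : ℝ)) • monForm n (k+1) τ σ := by
  funext s
  rw [Pi.add_apply, homotopy (monForm n (k+1) τ σ) s, Pi.smul_apply]
  rw [show monForm n (k+1) τ σ s = if s.1 = σ.1 then monomial (D τ) (1:ℝ) else 0 from
    monForm_apply τ σ s]
  by_cases hs : s.1 = σ.1
  · rw [if_pos hs, euler_monomial]
    rw [sub_eq_add_neg, ← neg_smul, ← neg_smul, ← add_smul, ← neg_add, Nat.cast_add]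
  · rw [if_neg hs]
    simp

end Stmt14Aux

open Stmt14Aux

/-- The homotopy decomposition of the star space:
`Q_1^{*,-}Λ^{k+1} = N(δ_{k+1}, Q_1^{*,-}Λ^{k+1}) ⊕ κ^δ(R(δ_{k+1}, Q_1^{*,-}Λ^{k+1}))`,
where `κ^δ = ⋆ ∘ κ ∘ ⋆`. -/
theorem stmt14 (n k : ℕ) (hk : k + 1 ≤ n) :
    Disjoint (LinearMap.ker (codiff n k) ⊓ Qs n (k+1))
        (Submodule.map (kappaDelta n k) (Submodule.map (codiff n k) (Qs n (k+1)))) ∧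
      Qs n (k+1) =
        (LinearMap.ker (codiff n k) ⊓ Qs n (k+1)) ⊔
          Submodule.map (kappaDelta n k) (Submodule.map (codiff n k) (Qs n (k+1))) := by
  constructor
  · -- disjointness
    rw [Submodule.disjoint_def]
    intro ω hω1 hω2
    obtain ⟨η, -, rfl⟩ := Submodule.mem_map.1 hω2
    have hker : codiff n k (kappaDelta n k η) = 0 :=
      LinearMap.mem_ker.1 (Submodule.mem_inf.1 hω1).1
    have hpoint : ∀ s : Idx n (k+1), (0 : MvPolynomial (Fin n) ℝ)
        = -(∑ i : Fin n, MvPolynomial.X i * MvPolynomial.pderiv i ((kappaDelta n k η) s))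
          - ((n-(k+1):ℕ):ℝ) • (kappaDelta n k η) s := by
      intro s
      have h := homotopy (kappaDelta n k η) s
      rw [hker, map_zero, kappa_kappa η, map_zero, Pi.zero_apply, add_zero] at h
      exact h
    have hconst : ∀ s, MvPolynomial.constantCoeff ((kappaDelta n k η) s) = 0 := by
      intro s
      rw [kappa_apply, map_sum]
      refine Finset.sum_eq_zero fun i _ => ?_
      rw [MvPolynomial.smul_eq_C_mul, map_mul, map_mul, MvPolynomial.constantCoeff_X,
        zero_mul, mul_zero]
    funext s
    rw [Pi.zero_apply]
    apply MvPolynomial.ext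
    intro m
    rw [MvPolynomial.coeff_zero]
    by_cases hm : m = 0
    · have := hconst s
      rw [MvPolynomial.constantCoeff_eq] at this
      rw [hm]
      exact this
    · have h := congrArg (MvPolynomial.coeff m) (hpoint s)
      rw [MvPolynomial.coeff_zero, MvPolynomial.coeff_sub, MvPolynomial.coeff_neg,
        coeff_euler, MvPolynomial.coeff_smul, smul_eq_mul] at h
      have hge : 1 ≤ ∑ i : Fin n, m i := pos_sum_of_ne_zero hm
      have hA : (1:ℝ) ≤ ((∑ i : Fin n, m i : ℕ):ℝ) := by exact_mod_cast hge
      have hr : (0:ℝ) ≤ ((n-(k+1):ℕ):ℝ) := Nat.cast_nonneg _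
      have hpos : (0:ℝ) < ((∑ i : Fin n, m i : ℕ):ℝ) + ((n-(k+1):ℕ):ℝ) := by linarith
      have h3 : (((∑ i : Fin n, m i : ℕ):ℝ) + ((n-(k+1):ℕ):ℝ))
          * MvPolynomial.coeff m ((kappaDelta n k η) s) = 0 := by
        linear_combination h
      rcases mul_eq_zero.1 h3 with h4 | h4
      · exact absurd h4 (ne_of_gt hpos)
      · exact h4
  · -- decomposition
    apply le_antisymm
    · rw [show Qs n (k+1) = Submodule.span ℝ
        {ω | ∃ (τ : Finset (Fin n)) (σ : Idx n (k+1)),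
          τ.card ≤ k+1 ∧ τ ⊆ (σ.1) ∧ ω = monForm n (k+1) τ σ} from rfl, Submodule.span_le]
      rintro ω ⟨τ, σ, hcard, hsub, rfl⟩
      have hmQs : monForm n (k+1) τ σ ∈ Qs n (k+1) :=
        Submodule.subset_span ⟨τ, σ, hcard, hsub, rfl⟩
      by_cases hc : (τ.card + (n - (k+1)) : ℕ) = 0
      · -- the kernel case
        have hτ : τ = ∅ := Finset.card_eq_zero.1 (by omega)
        have hker : codiff n k (monForm n (k+1) τ σ) = 0 := by
          funext s
          rw [codiff_apply, Pi.zero_apply]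
          rw [Finset.sum_eq_zero (fun j _ => by
            rw [extF_monForm]
            split
            · rw [hτ, show D (∅ : Finset (Fin n)) = 0 from by simp [D],
                MvPolynomial.pderiv_monomial]
              simp
            · rw [map_zero, smul_zero]), neg_zero]
        exact Submodule.mem_sup_left
          (Submodule.mem_inf.2 ⟨LinearMap.mem_ker.2 hker, hmQs⟩)
      · set m := monForm n (k+1) τ σ with hm
        set c : ℝ := -((τ.card + (n - (k+1)) : ℕ) : ℝ) with hcdef
        have hc0 : c ≠ 0 := neg_ne_zero.2 (Nat.cast_ne_zero.2 hc)
        have hhom : kappaDelta n k (codiff n k m) + codiff n (k+1) (kappaDelta n (k+1) m)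
            = c • m := homotopy_mon τ σ hsub
        have hAQs : kappaDelta n k (codiff n k m) ∈ Qs n (k+1) :=
          map_kappa_Qs (Submodule.mem_map_of_mem
            (map_codiff_Qs (Submodule.mem_map_of_mem hmQs)))
        have hy : c⁻¹ • (kappaDelta n k (codiff n k m)) ∈
            Submodule.map (kappaDelta n k) (Submodule.map (codiff n k) (Qs n (k+1))) := by
          rw [← LinearMap.map_smul, ← LinearMap.map_smul]
          exact Submodule.mem_map_of_mem
            (Submodule.mem_map_of_mem (Submodule.smul_mem _ _ hmQs))
        have hBm : codiff n (k+1) (kappaDelta n (k+1) m)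
            = c • m - kappaDelta n k (codiff n k m) := by
          rw [← hhom]
          abel
        have hxQs : c⁻¹ • (codiff n (k+1) (kappaDelta n (k+1) m)) ∈ Qs n (k+1) := by
          rw [hBm]
          exact Submodule.smul_mem _ _
            (Submodule.sub_mem _ (Submodule.smul_mem _ _ hmQs) hAQs)
        have hxker : codiff n k (c⁻¹ • (codiff n (k+1) (kappaDelta n (k+1) m))) = 0 := by
          rw [LinearMap.map_smul, codiff_codiff (kappaDelta n (k+1) m), smul_zero]
        refine Submodule.mem_sup.2
          ⟨c⁻¹ • (codiff n (k+1) (kappaDelta n (k+1) m)),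
            Submodule.mem_inf.2 ⟨LinearMap.mem_ker.2 hxker, hxQs⟩,
            c⁻¹ • (kappaDelta n k (codiff n k m)), hy, ?_⟩
        have hfin : c⁻¹ • (codiff n (k+1) (kappaDelta n (k+1) m)
            + kappaDelta n k (codiff n k m)) = m := by
          rw [add_comm (codiff n (k+1) (kappaDelta n (k+1) m)), hhom, smul_smul,
            inv_mul_cancel₀ hc0, one_smul]
        rw [← smul_add]
        exact hfin
    · refine sup_le inf_le_right ?_
      intro x hx
      obtain ⟨y, hy, rfl⟩ := Submodule.mem_map.1 hx
      exact map_kappa_Qs (Submodule.mem_map_of_mem (map_codiff_Qs hy))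
end

section
/- Strang-type error estimate: let ω ∈ HΛ^k solve ⟨d^k ω, d^k μ⟩ + ⟨ω, μ⟩ = ⟨f, μ⟩ for all μ ∈ HΛ^k, and let ω_h ∈ W_h^{def}Λ^k solve the discrete problem ⟨d_h^k ω_h, d_h^k μ_h⟩ + ⟨ω_h, μ_h⟩ = ⟨f, μ_h⟩ for all μ_h ∈ W_h^{def}Λ^k. Then the consistency error satisfies, for every ψ_h ∈ V_{h0}^{Q,*}Λ^{k+1} and μ_h ∈ W_h^{def}Λ^k, ⟨d^k ω, d_h^k μ_h⟩ − ⟨δ_{k+1} d^k ω, μ_h⟩ = ⟨d^k ω − ψ_h, d_h^k μ_h⟩ − ⟨δ_{k+1}(d^k ω − ψ_h), μ_h⟩ ≤ ‖d^k ω − ψ_h‖_{δ_{k+1}} ‖μ_h‖_{d_h^k}. -/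
open MvPolynomial Finset MeasureTheory

noncomputable def pint (n : ℕ) (r : Fin n → ℝ) (p : MvPolynomial (Fin n) ℝ) : ℝ :=
  ∫ x in Set.Icc (fun i => -(r i)) r, eval x p

lemma pint_integrable (n : ℕ) (r : Fin n → ℝ) (p : MvPolynomial (Fin n) ℝ) :
    IntegrableOn (fun x => eval x p) (Set.Icc (fun i => -(r i)) r) volume :=
  (MvPolynomial.continuous_eval p).continuousOn.integrableOn_compact isCompact_Icc

lemma pint_add (n : ℕ) (r : Fin n → ℝ) (p q : MvPolynomial (Fin n) ℝ) :
    pint n r (p + q) = pint n r p + pint n r q := by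
  unfold pint
  simp only [map_add]
  exact integral_add (pint_integrable n r p) (pint_integrable n r q)

lemma pint_smul (n : ℕ) (r : Fin n → ℝ) (c : ℝ) (p : MvPolynomial (Fin n) ℝ) :
    pint n r (c • p) = c * pint n r p := by
  unfold pint
  simp only [smul_eval, smul_eq_mul]
  exact integral_const_mul c _

lemma pint_sq_nonneg (n : ℕ) (r : Fin n → ℝ) (p : MvPolynomial (Fin n) ℝ) :
    0 ≤ pint n r (p * p) := by
  unfold pint
  apply integral_nonneg
  intro x
  simp only [map_mul]
  exact mul_self_nonneg _

lemma binner_eq (n k : ℕ) (r : Fin n → ℝ) (ω η : Form n k) :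
    binner n k r ω η = ∑ s : Idx n k, pint n r (ω s * η s) := rfl

lemma binner_comm (n k : ℕ) (r : Fin n → ℝ) (ω η : Form n k) :
    binner n k r ω η = binner n k r η ω := by
  simp only [binner_eq, mul_comm]

lemma binner_add_left (n k : ℕ) (r : Fin n → ℝ) (ω ω' η : Form n k) :
    binner n k r (ω + ω') η = binner n k r ω η + binner n k r ω' η := by
  simp only [binner_eq, ← Finset.sum_add_distrib]
  refine Finset.sum_congr rfl fun s _ => ?_
  rw [Pi.add_apply, add_mul, pint_add]

lemma binner_smul_left (n k : ℕ) (r : Fin n → ℝ) (c : ℝ) (ω η : Form n k) :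
    binner n k r (c • ω) η = c * binner n k r ω η := by
  simp only [binner_eq, Finset.mul_sum]
  refine Finset.sum_congr rfl fun s _ => ?_
  rw [Pi.smul_apply, smul_mul_assoc, pint_smul]

lemma binner_neg_left (n k : ℕ) (r : Fin n → ℝ) (ω η : Form n k) :
    binner n k r (-ω) η = -binner n k r ω η := by
  have := binner_smul_left n k r (-1) ω η
  simpa using this

lemma binner_sub_left (n k : ℕ) (r : Fin n → ℝ) (ω ω' η : Form n k) :
    binner n k r (ω - ω') η = binner n k r ω η - binner n k r ω' η := by
  rw [sub_eq_add_neg, binner_add_left, binner_neg_left, sub_eq_add_neg]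

lemma binner_self_nonneg (n k : ℕ) (r : Fin n → ℝ) (ω : Form n k) :
    0 ≤ binner n k r ω ω := by
  rw [binner_eq]
  exact Finset.sum_nonneg fun s _ => pint_sq_nonneg n r _

lemma cs_abstract {E : Type*} [AddCommGroup E] [Module ℝ E] (B : E → E → ℝ)
    (hadd : ∀ x y z, B (x + y) z = B x z + B y z)
    (hsmul : ∀ (c : ℝ) x y, B (c • x) y = c * B x y)
    (hsymm : ∀ x y, B x y = B y x)
    (hpos : ∀ x, 0 ≤ B x x) (v w : E) :
    B v w ≤ Real.sqrt (B v v) * Real.sqrt (B w w) := by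
  have key : ∀ t : ℝ, 0 ≤ B w w * (t * t) + (2 * B v w) * t + B v v := by
    intro t
    have h := hpos (v + t • w)
    have e1 : B (v + t • w) (v + t • w)
        = B v v + t * B w v + t * (B v w + t * B w w) := by
      rw [hadd, hsmul, hsymm v (v + t • w), hadd, hsmul, hsymm w (v + t • w), hadd, hsmul]
    rw [e1, hsymm w v] at h
    nlinarith [h]
  have hd := discrim_le_zero key
  rw [discrim] at hd
  have hsq : (B v w) ^ 2 ≤ B v v * B w w := by nlinarith [hd]
  calc B v w ≤ |B v w| := le_abs_self _
    _ = Real.sqrt ((B v w) ^ 2) := (Real.sqrt_sq_eq_abs _).symm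
    _ ≤ Real.sqrt (B v v * B w w) := Real.sqrt_le_sqrt hsq
    _ = Real.sqrt (B v v) * Real.sqrt (B w w) := Real.sqrt_mul (hpos v) _

/-- Theorem 4.4, consistency-error bound in the Strang estimate. On a cubical
mesh (cells `ι`, half-widths `r`, cell-centered local coordinates), with `V` the conforming
`Q_1^{*,-}Λ^{k+1}` space, `W = W_h^{def}Λ^k` the set of piecewise Whitney forms satisfying the
adjoint condition against `V`, `ω` the exact solution (given cellwise; `δ_{k+1}d^k ω + ω = f`),
and `ω_h ∈ W` the discrete solution: for every `ψ_h ∈ V` and `μ_h ∈ W`,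
`⟨d^k ω, d_h^k μ_h⟩ - ⟨δ_{k+1} d^k ω, μ_h⟩
  = ⟨d^k ω - ψ_h, d_h^k μ_h⟩ - ⟨δ_{k+1}(d^k ω - ψ_h), μ_h⟩
  ≤ ‖d^k ω - ψ_h‖_{δ_{k+1}} ‖μ_h‖_{d_h^k}`. -/
theorem stmt18 (n k : ℕ) (hk : k + 1 ≤ n)
    (ι : Type) [Fintype ι] (r : ι → Fin n → ℝ) (hr : ∀ K i, 0 < r K i)
    (V : Submodule ℝ (ι → Form n (k+1)))
    (hV : ∀ μ ∈ V, ∀ K, μ K ∈ Qs n (k+1))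
    (W : Set (ι → Form n k))
    (hW : ∀ μh, μh ∈ W ↔ ((∀ K, μh K ∈ Pm n k) ∧ ∀ ψ ∈ V, ∑ K : ι,
      (binner n (k+1) (r K) (extd n k (μh K)) (ψ K)
        - binner n k (r K) (μh K) (codiff n k (ψ K))) = 0))
    (f ω : ι → Form n k)
    (hsol : ∀ K, codiff n k (extd n k (ω K)) + ω K = f K)
    (ωh : ι → Form n k) (hωh : ωh ∈ W)
    (hdisc : ∀ μh ∈ W, ∑ K : ι,
      (binner n (k+1) (r K) (extd n k (ωh K)) (extd n k (μh K))
        + binner n k (r K) (ωh K) (μh K))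
      = ∑ K : ι, binner n k (r K) (f K) (μh K)) :
    ∀ ψh ∈ V, ∀ μh ∈ W,
      (∑ K : ι, (binner n (k+1) (r K) (extd n k (ω K)) (extd n k (μh K))
          - binner n k (r K) (codiff n k (extd n k (ω K))) (μh K)))
        = (∑ K : ι, (binner n (k+1) (r K) (extd n k (ω K) - ψh K) (extd n k (μh K))
          - binner n k (r K) (codiff n k (extd n k (ω K) - ψh K)) (μh K))) ∧
      (∑ K : ι, (binner n (k+1) (r K) (extd n k (ω K)) (extd n k (μh K))
          - binner n k (r K) (codiff n k (extd n k (ω K))) (μh K)))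
        ≤ Real.sqrt (∑ K : ι, (binner n (k+1) (r K) (extd n k (ω K) - ψh K)
              (extd n k (ω K) - ψh K)
            + binner n k (r K) (codiff n k (extd n k (ω K) - ψh K))
              (codiff n k (extd n k (ω K) - ψh K))))
          * Real.sqrt (∑ K : ι, (binner n k (r K) (μh K) (μh K)
            + binner n (k+1) (r K) (extd n k (μh K)) (extd n k (μh K)))) := by

  intro ψh hψh μh hμh
  have hadj := ((hW μh).mp hμh).2 ψh hψh
  -- the per-cell identity
  have key : ∀ K : ι,
      binner n (k+1) (r K) (extd n k (ω K) - ψh K) (extd n k (μh K))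
        - binner n k (r K) (codiff n k (extd n k (ω K) - ψh K)) (μh K)
      = (binner n (k+1) (r K) (extd n k (ω K)) (extd n k (μh K))
          - binner n k (r K) (codiff n k (extd n k (ω K))) (μh K))
        - (binner n (k+1) (r K) (extd n k (μh K)) (ψh K)
          - binner n k (r K) (μh K) (codiff n k (ψh K))) := by
    intro K
    rw [map_sub, binner_sub_left, binner_sub_left,
      binner_comm n (k+1) (r K) (extd n k (μh K)) (ψh K),
      binner_comm n k (r K) (μh K) (codiff n k (ψh K))]
    ring
  have heq : (∑ K : ι, (binner n (k+1) (r K) (extd n k (ω K)) (extd n k (μh K))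
          - binner n k (r K) (codiff n k (extd n k (ω K))) (μh K)))
      = (∑ K : ι, (binner n (k+1) (r K) (extd n k (ω K) - ψh K) (extd n k (μh K))
          - binner n k (r K) (codiff n k (extd n k (ω K) - ψh K)) (μh K))) := by
    have h2 : (∑ K : ι, (binner n (k+1) (r K) (extd n k (ω K) - ψh K) (extd n k (μh K))
          - binner n k (r K) (codiff n k (extd n k (ω K) - ψh K)) (μh K)))
        = (∑ K : ι, (binner n (k+1) (r K) (extd n k (ω K)) (extd n k (μh K))
            - binner n k (r K) (codiff n k (extd n k (ω K))) (μh K)))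
          - (∑ K : ι, (binner n (k+1) (r K) (extd n k (μh K)) (ψh K)
            - binner n k (r K) (μh K) (codiff n k (ψh K)))) := by
      rw [← Finset.sum_sub_distrib]
      exact Finset.sum_congr rfl fun K _ => key K
    rw [h2, hadj, sub_zero]
  refine ⟨heq, ?_⟩
  -- Cauchy–Schwarz
  set B   : ((ι → Form n (k+1)) × (ι → Form n k)) → ((ι → Form n (k+1)) × (ι → Form n k)) → ℝ := fun v w => ∑ K : ι,
    (binner n (k+1) (r K) (v.1 K) (w.1 K) + binner n k (r K) (v.2 K) (w.2 K)) with hB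
  have hadd : ∀ x y z : ((ι → Form n (k+1)) × (ι → Form n k)), B (x + y) z = B x z + B y z := by
    intro x y z
    simp only [hB]
    simp only [← Finset.sum_add_distrib]
    refine Finset.sum_congr rfl fun K _ => ?_
    simp only [Prod.fst_add, Prod.snd_add, Pi.add_apply, binner_add_left]
    ring
  have hsmul : ∀ (c : ℝ) (x y : ((ι → Form n (k+1)) × (ι → Form n k))), B (c • x) y = c * B x y := by
    intro c x y
    simp only [hB]
    simp only [Finset.mul_sum]
    refine Finset.sum_congr rfl fun K _ => ?_
    simp only [Prod.smul_fst, Prod.smul_snd, Pi.smul_apply, binner_smul_left]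
    ring
  have hsymm : ∀ x y : ((ι → Form n (k+1)) × (ι → Form n k)), B x y = B y x := by
    intro x y
    exact Finset.sum_congr rfl fun K _ => by
      rw [binner_comm n (k+1) (r K), binner_comm n k (r K)]
  have hpos : ∀ x : ((ι → Form n (k+1)) × (ι → Form n k)), 0 ≤ B x x := by
    intro x
    exact Finset.sum_nonneg fun K _ =>
      add_nonneg (binner_self_nonneg _ _ _ _) (binner_self_nonneg _ _ _ _)
  set v : ((ι → Form n (k+1)) × (ι → Form n k)) := (fun K => extd n k (ω K) - ψh K,
    fun K => -(codiff n k (extd n k (ω K) - ψh K))) with hv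
  set w : ((ι → Form n (k+1)) × (ι → Form n k)) := (fun K => extd n k (μh K), μh) with hw
  have hBvw : B v w = ∑ K : ι, (binner n (k+1) (r K) (extd n k (ω K) - ψh K) (extd n k (μh K))
      - binner n k (r K) (codiff n k (extd n k (ω K) - ψh K)) (μh K)) := by
    simp only [hB, hv, hw]
    refine Finset.sum_congr rfl fun K _ => ?_
    simp only [binner_neg_left]
    ring
  have hBvv : B v v = ∑ K : ι, (binner n (k+1) (r K) (extd n k (ω K) - ψh K)
        (extd n k (ω K) - ψh K)
      + binner n k (r K) (codiff n k (extd n k (ω K) - ψh K))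
        (codiff n k (extd n k (ω K) - ψh K))) := by
    simp only [hB, hv]
    refine Finset.sum_congr rfl fun K _ => ?_
    rw [binner_neg_left, binner_comm n k (r K), binner_neg_left, neg_neg]
  have hBww : B w w = ∑ K : ι, (binner n k (r K) (μh K) (μh K)
      + binner n (k+1) (r K) (extd n k (μh K)) (extd n k (μh K))) := by
    simp only [hB, hw]
    exact Finset.sum_congr rfl fun K _ => add_comm _ _
  calc (∑ K : ι, (binner n (k+1) (r K) (extd n k (ω K)) (extd n k (μh K))
          - binner n k (r K) (codiff n k (extd n k (ω K))) (μh K)))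
      = B v w := by rw [heq, hBvw]
    _ ≤ Real.sqrt (B v v) * Real.sqrt (B w w) := cs_abstract B hadd hsmul hsymm hpos v w
    _ = _ := by rw [hBvv, hBww]
end
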